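/- arXiv:2111.05156 — 14 statements merged into one kernel-verified Lean document; each statement's English description precedes it below -/
import Mathlib

section
/- Let N ≥ 1, k ≥ 1, T > 0, β > 0, L > 0. Suppose F : ℝ^N → ℝ^N satisfies ‖F(y)‖ ≤ L(1 + ‖y‖) for all y, and suppose x : ℝ → ℝ^N and v_1, …, v_k : ℝ → ℝ^N are such that ‖v_j(t)‖ = 1 for all t ∈ [0,T] and 1 ≤ j ≤ k, x is differentiable on [0,T], and x'(t) = β (I - 2 ∑_{j=1}^k v_j(t) v_j(t)ᵀ) F(x(t)) for all t ∈ [0,T]. Then for every t ∈ [0,T], ‖x(t)‖² ≤ (‖x(0)‖² + (1+2k) β L T) · exp(3(1+2k) β L T). -/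
open scoped InnerProductSpace

/-- Boundedness of the position variable of the continuous index-k saddle dynamics
(estimate (2.8) in the paper). -/
theorem boundedness_of_position_kSD (N k : ℕ) (hN : 1 ≤ N) (hk : 1 ≤ k)
    (T β L : ℝ) (hT : 0 < T) (hβ : 0 < β) (hL : 0 < L)
    (F : EuclideanSpace ℝ (Fin N) → EuclideanSpace ℝ (Fin N))
    (hF : ∀ y, ‖F y‖ ≤ L * (1 + ‖y‖))
    (x : ℝ → EuclideanSpace ℝ (Fin N))
    (v : Fin k → ℝ → EuclideanSpace ℝ (Fin N))
    (hv : ∀ t ∈ Set.Icc (0:ℝ) T, ∀ j, ‖v j t‖ = 1)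
    (hx : ∀ t ∈ Set.Icc (0:ℝ) T,
      HasDerivWithinAt x
        (β • (F (x t) - (2:ℝ) • ∑ j, ⟪v j t, F (x t)⟫_ℝ • v j t))
        (Set.Icc (0:ℝ) T) t) :
    ∀ t ∈ Set.Icc (0:ℝ) T,
      ‖x t‖ ^ 2 ≤ (‖x 0‖ ^ 2 + (1 + 2 * (k:ℝ)) * β * L * T) *
        Real.exp (3 * (1 + 2 * (k:ℝ)) * β * L * T) := by
  set A : ℝ := (1 + 2 * (k:ℝ)) * β * L with hAdef
  have hA0 : 0 < A := by positivity
  set d : ℝ → EuclideanSpace ℝ (Fin N) :=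
    fun t => β • (F (x t) - (2:ℝ) • ∑ j, ⟪v j t, F (x t)⟫_ℝ • v j t) with hd
  -- bound on the derivative of x
  have hdnorm : ∀ t ∈ Set.Icc (0:ℝ) T, ‖d t‖ ≤ A * (1 + ‖x t‖) := by
    intro t ht
    have hFb := hF (x t)
    have hsum : ‖∑ j, ⟪v j t, F (x t)⟫_ℝ • v j t‖ ≤ (k : ℝ) * ‖F (x t)‖ := by
      calc ‖∑ j, ⟪v j t, F (x t)⟫_ℝ • v j t‖
          ≤ ∑ j, ‖⟪v j t, F (x t)⟫_ℝ • v j t‖ := norm_sum_le _ _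
        _ ≤ ∑ _j : Fin k, ‖F (x t)‖ := by
            apply Finset.sum_le_sum
            intro j _
            rw [norm_smul, hv t ht j, mul_one]
            calc ‖⟪v j t, F (x t)⟫_ℝ‖ = |⟪v j t, F (x t)⟫_ℝ| := rfl
              _ ≤ ‖v j t‖ * ‖F (x t)‖ := abs_real_inner_le_norm _ _
              _ = ‖F (x t)‖ := by rw [hv t ht j, one_mul]
        _ = (k : ℝ) * ‖F (x t)‖ := by simp
    have h1 : ‖d t‖ ≤ β * ((1 + 2 * (k:ℝ)) * ‖F (x t)‖) := by
      rw [hd]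
      simp only [norm_smul, Real.norm_eq_abs, abs_of_pos hβ]
      apply mul_le_mul_of_nonneg_left _ hβ.le
      calc ‖F (x t) - (2:ℝ) • ∑ j, ⟪v j t, F (x t)⟫_ℝ • v j t‖
          ≤ ‖F (x t)‖ + ‖(2:ℝ) • ∑ j, ⟪v j t, F (x t)⟫_ℝ • v j t‖ := norm_sub_le _ _
        _ ≤ ‖F (x t)‖ + 2 * ((k : ℝ) * ‖F (x t)‖) := by
            rw [norm_smul]
            simp only [Real.norm_ofNat]
            nlinarith
        _ = (1 + 2 * (k:ℝ)) * ‖F (x t)‖ := by ring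
    calc ‖d t‖ ≤ β * ((1 + 2 * (k:ℝ)) * ‖F (x t)‖) := h1
      _ ≤ β * ((1 + 2 * (k:ℝ)) * (L * (1 + ‖x t‖))) := by
          apply mul_le_mul_of_nonneg_left _ hβ.le
          apply mul_le_mul_of_nonneg_left hFb
          positivity
      _ = A * (1 + ‖x t‖) := by rw [hAdef]; ring
  -- the squared norm function and its derivative
  set g : ℝ → ℝ := fun t => ‖x t‖ ^ 2 with hg
  set g' : ℝ → ℝ := fun t => 2 * ⟪x t, d t⟫_ℝ with hg'
  have hxc : ContinuousOn x (Set.Icc 0 T) := fun t ht => (hx t ht).continuousWithinAt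
  have hgc : ContinuousOn g (Set.Icc 0 T) := (hxc.norm).pow 2
  have hgd : ∀ t ∈ Set.Ico (0:ℝ) T, HasDerivWithinAt g (g' t) (Set.Ici t) t := by
    intro t ht
    have htT : t < T := ht.2
    have ht0 : 0 ≤ t := ht.1
    have hmem : Set.Icc (0:ℝ) T ∈ nhdsWithin t (Set.Ici t) := by
      apply mem_nhdsWithin.2
      exact ⟨Set.Iio T, isOpen_Iio, htT, by
        intro s hs
        exact ⟨le_trans ht0 hs.2, le_of_lt hs.1⟩⟩
    have hx' : HasDerivWithinAt x (d t) (Set.Ici t) t :=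
      (hx t ⟨ht0, htT.le⟩).mono_of_mem_nhdsWithin hmem
    have hinner : HasDerivWithinAt (fun s => ⟪x s, x s⟫_ℝ)
        (⟪x t, d t⟫_ℝ + ⟪d t, x t⟫_ℝ) (Set.Ici t) t :=
      hx'.inner ℝ hx'
    have heq : (fun s : ℝ => ⟪x s, x s⟫_ℝ) = g := by
      funext s
      rw [hg]
      exact real_inner_self_eq_norm_sq _
    rw [heq] at hinner
    convert hinner using 1
    show (2:ℝ) * ⟪x t, d t⟫_ℝ = _
    rw [real_inner_comm (d t) (x t)]
    ring
  have hbound : ∀ t ∈ Set.Ico (0:ℝ) T, ‖g' t‖ ≤ (3 * A) * ‖g t‖ + A := by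
    intro t ht
    have htI : t ∈ Set.Icc (0:ℝ) T := ⟨ht.1, ht.2.le⟩
    have h1 : |⟪x t, d t⟫_ℝ| ≤ ‖x t‖ * ‖d t‖ := abs_real_inner_le_norm _ _
    have h2 : ‖d t‖ ≤ A * (1 + ‖x t‖) := hdnorm t htI
    have hx0 : (0:ℝ) ≤ ‖x t‖ := norm_nonneg _
    have hgeq : ‖g t‖ = ‖x t‖ ^ 2 := by
      rw [hg, Real.norm_eq_abs, abs_of_nonneg (by positivity)]
    rw [hgeq, hg']
    rw [Real.norm_eq_abs, abs_mul, abs_two]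
    have h3 : ‖x t‖ * ‖d t‖ ≤ ‖x t‖ * (A * (1 + ‖x t‖)) :=
      mul_le_mul_of_nonneg_left h2 hx0
    nlinarith [sq_nonneg (1 - ‖x t‖), abs_nonneg ⟪x t, d t⟫_ℝ]
  have hga : ‖g 0‖ ≤ ‖x 0‖ ^ 2 := by
    rw [hg, Real.norm_eq_abs, abs_of_nonneg (by positivity)]
  have key := norm_le_gronwallBound_of_norm_deriv_right_le hgc hgd hga hbound
  intro t ht
  have hkey := key t ht
  rw [gronwallBound_of_K_ne_0 (by positivity : (3*A) ≠ 0)] at hkey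
  have hgeq : ‖g t‖ = ‖x t‖ ^ 2 := by
    rw [hg, Real.norm_eq_abs, abs_of_nonneg (by positivity)]
  rw [hgeq, sub_zero] at hkey
  -- final arithmetic
  have hexp_le : Real.exp (3 * A * t) ≤ Real.exp (3 * A * T) :=
    Real.exp_le_exp.2 (by nlinarith [ht.1, ht.2])
  have hexpT_pos : (0:ℝ) < Real.exp (3 * A * T) := Real.exp_pos _
  have hexpt_pos : (0:ℝ) < Real.exp (3 * A * t) := Real.exp_pos _
  have h2 : (1 - 3 * A * T) * Real.exp (3 * A * T) ≤ 1 := by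
    have h := Real.add_one_le_exp (-(3 * A * T))
    rw [Real.exp_neg] at h
    have := mul_le_mul_of_nonneg_right h hexpT_pos.le
    rwa [inv_mul_cancel₀ hexpT_pos.ne', neg_add_eq_sub] at this
  have hδ : (0:ℝ) ≤ ‖x 0‖ ^ 2 := by positivity
  have goal : ‖x t‖ ^ 2 ≤ (‖x 0‖ ^ 2 + A * T) * Real.exp (3 * A * T) := by
    have hediv : A / (3 * A) = 1 / 3 := by
      field_simp
    rw [hediv] at hkey
    nlinarith [mul_le_mul_of_nonneg_left hexp_le hδ]
  calc ‖x t‖ ^ 2 ≤ (‖x 0‖ ^ 2 + A * T) * Real.exp (3 * A * T) := goal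
    _ = (‖x 0‖ ^ 2 + (1 + 2 * (k:ℝ)) * β * L * T) *
        Real.exp (3 * (1 + 2 * (k:ℝ)) * β * L * T) := by rw [hAdef]; ring_nf
end

section
/- Let N ≥ 1, let v ∈ ℝ^N with ‖v‖ = 1, let J be a linear map from ℝ^N to ℝ^N with operator norm ‖J‖ ≤ J̄, let τ, γ ≥ 0, and set ṽ = v + τ γ (I - v vᵀ) J v. Then |‖ṽ‖ - 1| ≤ |‖ṽ‖² - 1| ≤ τ² γ² J̄². -/
open scoped InnerProductSpace

/-- Lemma 3.1 of the paper: |‖ṽ‖ - 1| ≤ |‖ṽ‖² - 1| ≤ τ² γ² J̄² for the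
un-normalized Euler direction update. -/
theorem norm_near_one_euler_direction_update (N : ℕ) (hN : 1 ≤ N)
    (v : EuclideanSpace ℝ (Fin N)) (hv : ‖v‖ = 1)
    (J : EuclideanSpace ℝ (Fin N) →L[ℝ] EuclideanSpace ℝ (Fin N))
    (Jbar : ℝ) (hJ : ‖J‖ ≤ Jbar) (τ γ : ℝ) (hτ : 0 ≤ τ) (hγ : 0 ≤ γ)
    (vt : EuclideanSpace ℝ (Fin N))
    (hvt : vt = v + (τ * γ) • (J v - ⟪v, J v⟫_ℝ • v)) :
    |‖vt‖ - 1| ≤ |‖vt‖ ^ 2 - 1| ∧ |‖vt‖ ^ 2 - 1| ≤ τ ^ 2 * γ ^ 2 * Jbar ^ 2 := by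
  set w : EuclideanSpace ℝ (Fin N) := J v - ⟪v, J v⟫_ℝ • v with hw
  have hvv : ⟪v, v⟫_ℝ = 1 := by
    rw [real_inner_self_eq_norm_sq, hv]; norm_num
  have horth : ⟪v, w⟫_ℝ = 0 := by
    rw [hw, inner_sub_right, inner_smul_right, hvv]; ring
  have hvv' : ⟪w, v⟫_ℝ = 0 := by rw [real_inner_comm]; exact horth
  have hnorm2 : ‖vt‖ ^ 2 = 1 + (τ * γ) ^ 2 * ‖w‖ ^ 2 := by
    rw [hvt, ← real_inner_self_eq_norm_sq]
    simp only [inner_add_left, inner_add_right, inner_smul_left, inner_smul_right,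
      real_inner_comm w v, horth, hvv, hvv', RCLike.star_def, starRingEnd_apply, star_trivial]
    rw [real_inner_self_eq_norm_sq]
    ring
  have hJbar0 : 0 ≤ Jbar := le_trans J.opNorm_nonneg hJ
  have hwle : ‖w‖ ^ 2 ≤ Jbar ^ 2 := by
    have h1 : ‖w‖ ^ 2 = ‖J v‖ ^ 2 - ⟪v, J v⟫_ℝ ^ 2 := by
      rw [hw, ← real_inner_self_eq_norm_sq]
      simp only [inner_sub_left, inner_sub_right, inner_smul_left, inner_smul_right,
        real_inner_comm (J v) v, hvv, RCLike.star_def, starRingEnd_apply, star_trivial]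
      rw [real_inner_self_eq_norm_sq]
      ring
    have h2 : ‖J v‖ ≤ Jbar := by
      calc ‖J v‖ ≤ ‖J‖ * ‖v‖ := J.le_opNorm v
      _ ≤ Jbar := by rw [hv, mul_one]; exact hJ
    nlinarith [sq_nonneg (⟪v, J v⟫_ℝ), norm_nonneg (J v)]
  have hge1 : 1 ≤ ‖vt‖ ^ 2 := by nlinarith [sq_nonneg (τ * γ), sq_nonneg ‖w‖]
  have hge1' : 1 ≤ ‖vt‖ := by nlinarith [norm_nonneg vt]
  constructor
  · rw [abs_of_nonneg (by linarith), abs_of_nonneg (by linarith)]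
    nlinarith
  · rw [abs_of_nonneg (by linarith)]
    nlinarith [sq_nonneg (τ * γ), sq_nonneg ‖w‖, mul_nonneg hτ hγ]
end

section
/- Let N ≥ 1, let v ∈ ℝ^N with ‖v‖ = 1, let J be a linear map from ℝ^N to ℝ^N with operator norm ‖J‖ ≤ J̄, let τ, γ ≥ 0, and set ṽ = v + τ γ (I - v vᵀ) J v. Then ṽ ≠ 0 and ‖ṽ - ṽ/‖ṽ‖‖ ≤ τ² γ² J̄². -/
open scoped InnerProductSpace

/-- Corollary 3.1 of the paper: the normalization step of the explicit Euler scheme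
for index-1 saddle dynamics changes ṽ by at most τ² γ² J̄². -/
theorem normalization_error_euler_direction_update (N : ℕ) (hN : 1 ≤ N)
    (v : EuclideanSpace ℝ (Fin N)) (hv : ‖v‖ = 1)
    (J : EuclideanSpace ℝ (Fin N) →L[ℝ] EuclideanSpace ℝ (Fin N))
    (Jbar : ℝ) (hJ : ‖J‖ ≤ Jbar) (τ γ : ℝ) (hτ : 0 ≤ τ) (hγ : 0 ≤ γ)
    (vt : EuclideanSpace ℝ (Fin N))
    (hvt : vt = v + (τ * γ) • (J v - ⟪v, J v⟫_ℝ • v)) :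
    vt ≠ 0 ∧ ‖vt - ‖vt‖⁻¹ • vt‖ ≤ τ ^ 2 * γ ^ 2 * Jbar ^ 2 := by
  set c : ℝ := ⟪v, J v⟫_ℝ with hc
  set w : EuclideanSpace ℝ (Fin N) := (τ * γ) • (J v - c • v) with hw
  have hvv : ⟪v, v⟫_ℝ = 1 := by
    rw [real_inner_self_eq_norm_sq, hv]; norm_num
  have hortho : ⟪v, w⟫_ℝ = 0 := by
    rw [hw, real_inner_smul_right, inner_sub_right, real_inner_smul_right, hvv]
    ring
  have hvt' : vt = v + w := hvt
  have hsq : ‖vt‖ ^ 2 = 1 + ‖w‖ ^ 2 := by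
    rw [hvt', norm_add_sq_real, hortho, hv]; ring
  have hge : 1 ≤ ‖vt‖ := by
    have h1 : 1 ≤ ‖vt‖ ^ 2 := by linarith [sq_nonneg ‖w‖]
    exact (one_le_pow_iff_of_nonneg (norm_nonneg vt) two_ne_zero).mp h1
  have hpos : 0 < ‖vt‖ := lt_of_lt_of_le one_pos hge
  have hne : vt ≠ 0 := by
    intro h; rw [h, norm_zero] at hpos; exact lt_irrefl 0 hpos
  refine ⟨hne, ?_⟩
  -- bound ‖w‖ by τ γ Jbar
  have hJbar : 0 ≤ Jbar := le_trans (norm_nonneg J) hJ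
  have hproj : ‖J v - c • v‖ ≤ ‖J v‖ := by
    have h1 : ‖J v - c • v‖ ^ 2 = ‖J v‖ ^ 2 - c ^ 2 := by
      rw [norm_sub_sq_real, real_inner_smul_right, norm_smul, hv,
        real_inner_comm, ← hc, Real.norm_eq_abs]
      rw [mul_one, sq_abs]; ring
    have h2 : ‖J v - c • v‖ ^ 2 ≤ ‖J v‖ ^ 2 := by linarith [sq_nonneg c]
    calc ‖J v - c • v‖ = Real.sqrt (‖J v - c • v‖ ^ 2) := (Real.sqrt_sq (norm_nonneg _)).symm
    _ ≤ Real.sqrt (‖J v‖ ^ 2) := Real.sqrt_le_sqrt h2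
    _ = ‖J v‖ := Real.sqrt_sq (norm_nonneg _)
  have hJv : ‖J v‖ ≤ Jbar := by
    calc ‖J v‖ ≤ ‖J‖ * ‖v‖ := J.le_opNorm v
    _ = ‖J‖ := by rw [hv, mul_one]
    _ ≤ Jbar := hJ
  have hwle : ‖w‖ ≤ τ * γ * Jbar := by
    rw [hw, norm_smul, Real.norm_eq_abs, abs_of_nonneg (mul_nonneg hτ hγ)]
    exact mul_le_mul_of_nonneg_left (hproj.trans hJv) (mul_nonneg hτ hγ)
  -- compute the error
  have hkey : ‖vt - ‖vt‖⁻¹ • vt‖ = ‖vt‖ - 1 := by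
    have : vt - ‖vt‖⁻¹ • vt = (1 - ‖vt‖⁻¹) • vt := by
      rw [sub_smul, one_smul]
    rw [this, norm_smul, Real.norm_eq_abs, abs_of_nonneg]
    · field_simp
    · have : ‖vt‖⁻¹ ≤ 1 := by
        rw [inv_le_one_iff₀]; right; exact hge
      linarith
  rw [hkey]
  have hwsq : ‖w‖ ^ 2 ≤ (τ * γ * Jbar) ^ 2 :=
    pow_le_pow_left₀ (norm_nonneg w) hwle 2
  have hkey2 : ‖vt‖ ^ 2 - ‖vt‖ = ‖vt‖ * (‖vt‖ - 1) := by ring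
  have hnn : 0 ≤ ‖vt‖ * (‖vt‖ - 1) := mul_nonneg (norm_nonneg vt) (by linarith)
  have h1 : ‖vt‖ - 1 ≤ ‖vt‖ ^ 2 - 1 := by linarith
  have h2 : ‖vt‖ ^ 2 - 1 = ‖w‖ ^ 2 := by linarith
  calc ‖vt‖ - 1 ≤ ‖w‖ ^ 2 := by linarith
  _ ≤ (τ * γ * Jbar) ^ 2 := hwsq
  _ = τ ^ 2 * γ ^ 2 * Jbar ^ 2 := by ring
end

section
/- Let N ≥ 1, τ, β ≥ 0, L > 0, and let F : ℝ^N → ℝ^N satisfy ‖F(a) - F(b)‖ ≤ L‖a - b‖ and ‖F(y)‖ ≤ L(1 + ‖y‖) for all a, b, y. Let x̄, x ∈ ℝ^N and let v̄, v ∈ ℝ^N with ‖v̄‖ = ‖v‖ = 1. Set x̄⁺ = x̄ + τ β (I - 2 v̄ v̄ᵀ) F(x̄) and x⁺ = x + τ β (I - 2 v vᵀ) F(x). Then ‖x̄⁺ - x⁺‖ ≤ (1 + 3 τ β L) ‖x̄ - x‖ + 4 τ β L (1 + ‖x̄‖) ‖v̄ - v‖. -/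
open scoped InnerProductSpace

/-- One-step stability estimate for the position update of the explicit Euler
scheme for index-1 saddle dynamics (part of the proof of Theorem 3.1). -/
theorem one_step_position_stability_euler_1SD (N : ℕ) (hN : 1 ≤ N)
    (τ β L : ℝ) (hτ : 0 ≤ τ) (hβ : 0 ≤ β) (hL : 0 < L)
    (F : EuclideanSpace ℝ (Fin N) → EuclideanSpace ℝ (Fin N))
    (hFlip : ∀ a b, ‖F a - F b‖ ≤ L * ‖a - b‖)
    (hFg : ∀ y, ‖F y‖ ≤ L * (1 + ‖y‖))
    (x1 x2 v1 v2 : EuclideanSpace ℝ (Fin N)) (hv1 : ‖v1‖ = 1) (hv2 : ‖v2‖ = 1) :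
    ‖(x1 + (τ * β) • (F x1 - (2 * ⟪v1, F x1⟫_ℝ) • v1)) -
      (x2 + (τ * β) • (F x2 - (2 * ⟪v2, F x2⟫_ℝ) • v2))‖
      ≤ (1 + 3 * τ * β * L) * ‖x1 - x2‖ + 4 * τ * β * L * (1 + ‖x1‖) * ‖v1 - v2‖ := by
  set c := τ * β with hc
  have hc0 : 0 ≤ c := mul_nonneg hτ hβ
  have hF1 : ‖F x1‖ ≤ L * (1 + ‖x1‖) := hFg x1
  have hFl : ‖F x1 - F x2‖ ≤ L * ‖x1 - x2‖ := hFlip x1 x2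
  have hscal : ⟪v2, F x2⟫_ℝ
      = ⟪v1, F x1⟫_ℝ - ⟪v1 - v2, F x1⟫_ℝ - ⟪v2, F x1 - F x2⟫_ℝ := by
    simp [inner_sub_left, inner_sub_right]
  have hvec : (2 * ⟪v1, F x1⟫_ℝ) • v1 - (2 * ⟪v2, F x2⟫_ℝ) • v2
      = (2 * ⟪v1, F x1⟫_ℝ) • (v1 - v2)
        + (2 * (⟪v1 - v2, F x1⟫_ℝ + ⟪v2, F x1 - F x2⟫_ℝ)) • v2 := by
    rw [hscal]; module
  have hD : (x1 + c • (F x1 - (2 * ⟪v1, F x1⟫_ℝ) • v1)) -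
      (x2 + c • (F x2 - (2 * ⟪v2, F x2⟫_ℝ) • v2))
      = ((x1 - x2) + c • (F x1 - F x2))
        - c • ((2 * ⟪v1, F x1⟫_ℝ) • v1 - (2 * ⟪v2, F x2⟫_ℝ) • v2) := by
    module
  rw [hD, hvec]
  have h1 : ‖((x1 - x2) + c • (F x1 - F x2))
        - c • ((2 * ⟪v1, F x1⟫_ℝ) • (v1 - v2)
          + (2 * (⟪v1 - v2, F x1⟫_ℝ + ⟪v2, F x1 - F x2⟫_ℝ)) • v2)‖
      ≤ ‖x1 - x2‖ + ‖c • (F x1 - F x2)‖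
        + (‖c • ((2 * ⟪v1, F x1⟫_ℝ) • (v1 - v2))‖
          + ‖c • ((2 * (⟪v1 - v2, F x1⟫_ℝ + ⟪v2, F x1 - F x2⟫_ℝ)) • v2)‖) := by
    calc _ ≤ ‖(x1 - x2) + c • (F x1 - F x2)‖
          + ‖c • ((2 * ⟪v1, F x1⟫_ℝ) • (v1 - v2)
            + (2 * (⟪v1 - v2, F x1⟫_ℝ + ⟪v2, F x1 - F x2⟫_ℝ)) • v2)‖ :=
        norm_sub_le _ _
      _ ≤ _ := by
        rw [smul_add]
        gcongr <;> [exact norm_add_le _ _; exact norm_add_le _ _]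
  refine h1.trans ?_
  have hi1 : |⟪v1, F x1⟫_ℝ| ≤ L * (1 + ‖x1‖) := by
    calc |⟪v1, F x1⟫_ℝ| ≤ ‖v1‖ * ‖F x1‖ := abs_real_inner_le_norm _ _
      _ ≤ L * (1 + ‖x1‖) := by rw [hv1, one_mul]; exact hF1
  have hi2 : |⟪v1 - v2, F x1⟫_ℝ| ≤ ‖v1 - v2‖ * (L * (1 + ‖x1‖)) := by
    calc |⟪v1 - v2, F x1⟫_ℝ| ≤ ‖v1 - v2‖ * ‖F x1‖ := abs_real_inner_le_norm _ _
      _ ≤ _ := by gcongr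
  have hi3 : |⟪v2, F x1 - F x2⟫_ℝ| ≤ L * ‖x1 - x2‖ := by
    calc |⟪v2, F x1 - F x2⟫_ℝ| ≤ ‖v2‖ * ‖F x1 - F x2‖ := abs_real_inner_le_norm _ _
      _ ≤ L * ‖x1 - x2‖ := by rw [hv2, one_mul]; exact hFl
  have n1 : ‖c • (F x1 - F x2)‖ ≤ c * (L * ‖x1 - x2‖) := by
    rw [norm_smul, Real.norm_eq_abs, abs_of_nonneg hc0]; gcongr
  have n2 : ‖c • ((2 * ⟪v1, F x1⟫_ℝ) • (v1 - v2))‖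
      ≤ c * (2 * (L * (1 + ‖x1‖)) * ‖v1 - v2‖) := by
    rw [norm_smul, norm_smul, Real.norm_eq_abs, Real.norm_eq_abs,
      abs_of_nonneg hc0, abs_mul, abs_two]
    gcongr
  have n3 : ‖c • ((2 * (⟪v1 - v2, F x1⟫_ℝ + ⟪v2, F x1 - F x2⟫_ℝ)) • v2)‖
      ≤ c * (2 * (‖v1 - v2‖ * (L * (1 + ‖x1‖)) + L * ‖x1 - x2‖)) := by
    rw [norm_smul, norm_smul, Real.norm_eq_abs, Real.norm_eq_abs,
      abs_of_nonneg hc0, abs_mul, abs_two, hv2, mul_one]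
    have habs : |⟪v1 - v2, F x1⟫_ℝ + ⟪v2, F x1 - F x2⟫_ℝ|
        ≤ ‖v1 - v2‖ * (L * (1 + ‖x1‖)) + L * ‖x1 - x2‖ :=
      (abs_add_le _ _).trans (add_le_add hi2 hi3)
    gcongr
  have heq : (1 + 3 * τ * β * L) * ‖x1 - x2‖ + 4 * τ * β * L * (1 + ‖x1‖) * ‖v1 - v2‖
      = ‖x1 - x2‖ + c * (L * ‖x1 - x2‖)
        + (c * (2 * (L * (1 + ‖x1‖)) * ‖v1 - v2‖)
          + c * (2 * (‖v1 - v2‖ * (L * (1 + ‖x1‖)) + L * ‖x1 - x2‖))) := by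
    simp only [hc]; ring
  rw [heq]
  linarith [n1, n2, n3]
end

section
/- Let N ≥ 1, τ, γ ≥ 0, L > 0, and let J map ℝ^N to linear maps from ℝ^N to ℝ^N with ‖J(a) - J(b)‖ ≤ L‖a - b‖ for all a, b (operator norm). Let x̄, x ∈ ℝ^N and let v̄, v ∈ ℝ^N with ‖v̄‖ = ‖v‖ = 1. Set v̄⁺ = v̄ + τ γ (I - v̄ v̄ᵀ) J(x̄) v̄ and v⁺ = v + τ γ (I - v vᵀ) J(x) v. Then ‖v̄⁺ - v⁺‖ ≤ (1 + 2 τ γ (‖J(x̄)‖ + ‖J(x)‖)) ‖v̄ - v‖ + 2 τ γ L ‖x̄ - x‖. -/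
open scoped InnerProductSpace

/-- One-step stability estimate for the un-normalized direction update of the
explicit Euler scheme for index-1 saddle dynamics (part of the proof of Theorem 3.2). -/
theorem one_step_direction_stability_euler_1SD (N : ℕ) (hN : 1 ≤ N)
    (τ γ L : ℝ) (hτ : 0 ≤ τ) (hγ : 0 ≤ γ) (hL : 0 < L)
    (J : EuclideanSpace ℝ (Fin N) →
      EuclideanSpace ℝ (Fin N) →L[ℝ] EuclideanSpace ℝ (Fin N))
    (hJlip : ∀ a b, ‖J a - J b‖ ≤ L * ‖a - b‖)
    (x1 x2 v1 v2 : EuclideanSpace ℝ (Fin N)) (hv1 : ‖v1‖ = 1) (hv2 : ‖v2‖ = 1) :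
    ‖(v1 + (τ * γ) • (J x1 v1 - ⟪v1, J x1 v1⟫_ℝ • v1)) -
      (v2 + (τ * γ) • (J x2 v2 - ⟪v2, J x2 v2⟫_ℝ • v2))‖
      ≤ (1 + 2 * τ * γ * (‖J x1‖ + ‖J x2‖)) * ‖v1 - v2‖ + 2 * τ * γ * L * ‖x1 - x2‖ := by
  set A := J x1
  set B := J x2
  set d := ‖v1 - v2‖ with hd
  set x := ‖x1 - x2‖ with hx
  have hd0 : 0 ≤ d := norm_nonneg _
  have hx0 : 0 ≤ x := norm_nonneg _
  have hτγ : 0 ≤ τ * γ := mul_nonneg hτ hγ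
  have hA0 : 0 ≤ ‖A‖ := norm_nonneg _
  have hB0 : 0 ≤ ‖B‖ := norm_nonneg _
  have hAB : ‖A - B‖ ≤ L * x := hJlip x1 x2
  -- bound for A v1 - B v2
  have h1 : ‖A v1 - B v2‖ ≤ ‖A‖ * d + L * x := by
    have : A v1 - B v2 = A (v1 - v2) + (A - B) v2 := by
      simp [map_sub, ContinuousLinearMap.sub_apply]
    rw [this]
    calc ‖A (v1 - v2) + (A - B) v2‖ ≤ ‖A (v1 - v2)‖ + ‖(A - B) v2‖ := norm_add_le _ _
      _ ≤ ‖A‖ * d + ‖A - B‖ * ‖v2‖ := by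
          gcongr
          · exact A.le_opNorm _
          · exact (A - B).le_opNorm _
      _ ≤ ‖A‖ * d + L * x := by rw [hv2]; nlinarith
  -- bound for the scalar difference
  have hs : |⟪v1, A v1⟫_ℝ - ⟪v2, B v2⟫_ℝ| ≤ (‖A‖ + ‖B‖) * d + L * x := by
    have heq : ⟪v1, A v1⟫_ℝ - ⟪v2, B v2⟫_ℝ
        = ⟪v1 - v2, A v1⟫_ℝ + ⟪v2, (A - B) v1⟫_ℝ + ⟪v2, B (v1 - v2)⟫_ℝ := by
      simp [inner_sub_left, inner_sub_right, map_sub, ContinuousLinearMap.sub_apply]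
    have e1 : |⟪v1 - v2, A v1⟫_ℝ| ≤ ‖A‖ * d := by
      calc |⟪v1 - v2, A v1⟫_ℝ| ≤ ‖v1 - v2‖ * ‖A v1‖ := abs_real_inner_le_norm _ _
        _ ≤ d * (‖A‖ * ‖v1‖) := by gcongr; exact A.le_opNorm _
        _ = ‖A‖ * d := by rw [hv1]; ring
    have e2 : |⟪v2, (A - B) v1⟫_ℝ| ≤ L * x := by
      calc |⟪v2, (A - B) v1⟫_ℝ| ≤ ‖v2‖ * ‖(A - B) v1‖ := abs_real_inner_le_norm _ _
        _ ≤ 1 * (‖A - B‖ * ‖v1‖) := by rw [hv2]; gcongr; exact (A - B).le_opNorm _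
        _ ≤ L * x := by rw [hv1]; nlinarith
    have e3 : |⟪v2, B (v1 - v2)⟫_ℝ| ≤ ‖B‖ * d := by
      calc |⟪v2, B (v1 - v2)⟫_ℝ| ≤ ‖v2‖ * ‖B (v1 - v2)‖ := abs_real_inner_le_norm _ _
        _ ≤ 1 * (‖B‖ * d) := by rw [hv2]; gcongr; exact B.le_opNorm _
        _ = ‖B‖ * d := by ring
    calc |⟪v1, A v1⟫_ℝ - ⟪v2, B v2⟫_ℝ|
        = |⟪v1 - v2, A v1⟫_ℝ + ⟪v2, (A - B) v1⟫_ℝ + ⟪v2, B (v1 - v2)⟫_ℝ| := by rw [heq]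
      _ ≤ |⟪v1 - v2, A v1⟫_ℝ + ⟪v2, (A - B) v1⟫_ℝ| + |⟪v2, B (v1 - v2)⟫_ℝ| := abs_add_le _ _
      _ ≤ (|⟪v1 - v2, A v1⟫_ℝ| + |⟪v2, (A - B) v1⟫_ℝ|) + |⟪v2, B (v1 - v2)⟫_ℝ| := by
          gcongr; exact abs_add_le _ _
      _ ≤ (‖A‖ * d + L * x) + ‖B‖ * d := by gcongr
      _ = (‖A‖ + ‖B‖) * d + L * x := by ring
  -- bound for the projection term difference
  have h2 : ‖⟪v1, A v1⟫_ℝ • v1 - ⟪v2, B v2⟫_ℝ • v2‖ ≤ (‖A‖ + 2 * ‖B‖) * d + L * x := by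
    have heq : ⟪v1, A v1⟫_ℝ • v1 - ⟪v2, B v2⟫_ℝ • v2
        = (⟪v1, A v1⟫_ℝ - ⟪v2, B v2⟫_ℝ) • v1 + ⟪v2, B v2⟫_ℝ • (v1 - v2) := by
      rw [sub_smul, smul_sub]; abel
    have hBv2 : |⟪v2, B v2⟫_ℝ| ≤ ‖B‖ := by
      calc |⟪v2, B v2⟫_ℝ| ≤ ‖v2‖ * ‖B v2‖ := abs_real_inner_le_norm _ _
        _ ≤ ‖v2‖ * (‖B‖ * ‖v2‖) := by gcongr; exact B.le_opNorm _
        _ = ‖B‖ := by rw [hv2]; ring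
    rw [heq]
    calc ‖(⟪v1, A v1⟫_ℝ - ⟪v2, B v2⟫_ℝ) • v1 + ⟪v2, B v2⟫_ℝ • (v1 - v2)‖
        ≤ ‖(⟪v1, A v1⟫_ℝ - ⟪v2, B v2⟫_ℝ) • v1‖ + ‖⟪v2, B v2⟫_ℝ • (v1 - v2)‖ := norm_add_le _ _
      _ = |⟪v1, A v1⟫_ℝ - ⟪v2, B v2⟫_ℝ| * ‖v1‖ + |⟪v2, B v2⟫_ℝ| * d := by
          rw [norm_smul, norm_smul]; norm_num; exact Or.inl hd.symm
      _ ≤ ((‖A‖ + ‖B‖) * d + L * x) * 1 + ‖B‖ * d := by rw [hv1]; gcongr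
      _ = (‖A‖ + 2 * ‖B‖) * d + L * x := by ring
  -- combine
  have hmain : ‖(v1 + (τ * γ) • (A v1 - ⟪v1, A v1⟫_ℝ • v1)) -
      (v2 + (τ * γ) • (B v2 - ⟪v2, B v2⟫_ℝ • v2))‖
      ≤ d + (τ * γ) * ((‖A‖ * d + L * x) + ((‖A‖ + 2 * ‖B‖) * d + L * x)) := by
    have heq : (v1 + (τ * γ) • (A v1 - ⟪v1, A v1⟫_ℝ • v1)) -
        (v2 + (τ * γ) • (B v2 - ⟪v2, B v2⟫_ℝ • v2))
        = (v1 - v2) + (τ * γ) • ((A v1 - B v2) - (⟪v1, A v1⟫_ℝ • v1 - ⟪v2, B v2⟫_ℝ • v2)) := by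
      module
    rw [heq]
    calc ‖(v1 - v2) + (τ * γ) • ((A v1 - B v2) - (⟪v1, A v1⟫_ℝ • v1 - ⟪v2, B v2⟫_ℝ • v2))‖
        ≤ d + ‖(τ * γ) • ((A v1 - B v2) - (⟪v1, A v1⟫_ℝ • v1 - ⟪v2, B v2⟫_ℝ • v2))‖ :=
          norm_add_le _ _
      _ = d + (τ * γ) * ‖(A v1 - B v2) - (⟪v1, A v1⟫_ℝ • v1 - ⟪v2, B v2⟫_ℝ • v2)‖ := by
          rw [norm_smul, Real.norm_eq_abs, abs_of_nonneg hτγ]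
      _ ≤ d + (τ * γ) * (‖A v1 - B v2‖ + ‖⟪v1, A v1⟫_ℝ • v1 - ⟪v2, B v2⟫_ℝ • v2‖) := by
          gcongr; exact norm_sub_le _ _
      _ ≤ d + (τ * γ) * ((‖A‖ * d + L * x) + ((‖A‖ + 2 * ‖B‖) * d + L * x)) := by gcongr
  refine hmain.trans ?_
  nlinarith [mul_nonneg hτγ hA0, mul_nonneg hτγ hB0, mul_nonneg (mul_nonneg hτγ hA0) hd0,
    mul_nonneg (mul_nonneg hτγ hB0) hd0]
end

section
/- Let N ≥ 1, T, β, L, C₀ > 0, and let F : ℝ^N → ℝ^N satisfy ‖F(a) - F(b)‖ ≤ L‖a - b‖ and ‖F(y)‖ ≤ L(1 + ‖y‖). Let x : ℝ → ℝ^N and v : ℝ → ℝ^N satisfy ‖v(t)‖ = 1 on [0,T] and the index-1 saddle dynamics x'(t) = β(I - 2 v(t)v(t)ᵀ)F(x(t)) on [0,T]. Then there exists Q > 0, depending only on β, L, T, C₀ and ‖x(0)‖ (and not on the time step), such that: for every positive integer N_T, setting τ = T/N_T and t_n = nτ, if (x_n)_{n=0}^{N_T}, (v_n)_{n=0}^{N_T}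 are sequences in ℝ^N with x_0 = x(0), v_0 = v(0), ‖v_n‖ = 1 for all n, x_n = x_{n-1} + τ β (I - 2 v_{n-1} v_{n-1}ᵀ) F(x_{n-1}) for 1 ≤ n ≤ N_T, and the truncation bound ‖x(t_n) - x(t_{n-1}) - τ β (I - 2 v(t_{n-1})v(t_{n-1})ᵀ) F(x(t_{n-1}))‖ ≤ C₀ τ² holds for 1 ≤ n ≤ N_T, then ‖x(t_n) - x_n‖ ≤ Q τ ∑_{m=1}^{n-1} ‖v(t_m) - v_m‖ + Q τ for all 1 ≤ n ≤ N_T. -/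
open scoped InnerProductSpace

lemma gdiff_bound {N : ℕ} (Fa Fb w u : EuclideanSpace ℝ (Fin N))
    (hw : ‖w‖ = 1) (hu : ‖u‖ = 1) :
    ‖(Fa - (2 * ⟪w, Fa⟫_ℝ) • w) - (Fb - (2 * ⟪u, Fb⟫_ℝ) • u)‖ ≤
      3 * ‖Fa - Fb‖ + 4 * ‖Fa‖ * ‖w - u‖ := by
  set c : ℝ := 2 * ⟪w, Fa⟫_ℝ with hc
  set c' : ℝ := 2 * ⟪u, Fb⟫_ℝ with hc'
  have hid : (Fa - c • w) - (Fb - c' • u)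
      = (Fa - Fb) - (c • (w - u) + (c - c') • u) := by module
  have h1 : |c| ≤ 2 * ‖Fa‖ := by
    rw [hc, abs_mul, abs_two]
    have h := abs_real_inner_le_norm w Fa
    rw [hw, one_mul] at h
    linarith
  have h2 : |c - c'| ≤ 2 * ‖Fa‖ * ‖w - u‖ + 2 * ‖Fa - Fb‖ := by
    have hcc : c - c' = 2 * ⟪w - u, Fa⟫_ℝ + 2 * ⟪u, Fa - Fb⟫_ℝ := by
      rw [hc, hc']; simp [inner_sub_left, inner_sub_right]; ring
    rw [hcc]
    have i1 := abs_real_inner_le_norm (w - u) Fa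
    have i2 := abs_real_inner_le_norm u (Fa - Fb)
    calc |2 * ⟪w - u, Fa⟫_ℝ + 2 * ⟪u, Fa - Fb⟫_ℝ|
        ≤ |2 * ⟪w - u, Fa⟫_ℝ| + |2 * ⟪u, Fa - Fb⟫_ℝ| := abs_add_le _ _
      _ ≤ 2 * ‖Fa‖ * ‖w - u‖ + 2 * ‖Fa - Fb‖ := by
          rw [abs_mul, abs_mul, abs_two]
          nlinarith [i1, i2, hu, norm_nonneg (w - u), norm_nonneg (Fa - Fb)]
  calc ‖(Fa - c • w) - (Fb - c' • u)‖
      = ‖(Fa - Fb) - (c • (w - u) + (c - c') • u)‖ := by rw [hid]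
    _ ≤ ‖Fa - Fb‖ + (‖c • (w - u)‖ + ‖(c - c') • u‖) :=
        (norm_sub_le _ _).trans (by gcongr; exact norm_add_le _ _)
    _ = ‖Fa - Fb‖ + (|c| * ‖w - u‖ + |c - c'| * ‖u‖) := by
        rw [norm_smul, norm_smul, Real.norm_eq_abs, Real.norm_eq_abs]
    _ ≤ 3 * ‖Fa - Fb‖ + 4 * ‖Fa‖ * ‖w - u‖ := by
        rw [hu]
        nlinarith [h1, h2, norm_nonneg (w - u), norm_nonneg (Fa - Fb), abs_nonneg c]

lemma g_bound {N : ℕ} (Fa w : EuclideanSpace ℝ (Fin N)) (hw : ‖w‖ = 1) :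
    ‖Fa - (2 * ⟪w, Fa⟫_ℝ) • w‖ ≤ 3 * ‖Fa‖ := by
  calc ‖Fa - (2 * ⟪w, Fa⟫_ℝ) • w‖ ≤ ‖Fa‖ + ‖(2 * ⟪w, Fa⟫_ℝ) • w‖ := norm_sub_le _ _
    _ = ‖Fa‖ + |2 * ⟪w, Fa⟫_ℝ| := by rw [norm_smul, Real.norm_eq_abs, hw, mul_one]
    _ ≤ 3 * ‖Fa‖ := by
        rw [abs_mul, abs_two]
        have h := abs_real_inner_le_norm w Fa
        rw [hw, one_mul] at h
        linarith [norm_nonneg Fa]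

set_option maxHeartbeats 2000000 in
/-- Theorem 3.1 of the paper: the position error of the explicit Euler scheme for
index-1 saddle dynamics is bounded by Qτ∑‖e^v_m‖ + Qτ. -/
theorem position_error_bound_euler_1SD (N : ℕ) (hN : 1 ≤ N)
    (T β L C₀ : ℝ) (hT : 0 < T) (hβ : 0 < β) (hL : 0 < L) (hC₀ : 0 < C₀)
    (F : EuclideanSpace ℝ (Fin N) → EuclideanSpace ℝ (Fin N))
    (hFlip : ∀ a b, ‖F a - F b‖ ≤ L * ‖a - b‖)
    (hFg : ∀ y, ‖F y‖ ≤ L * (1 + ‖y‖))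
    (x v : ℝ → EuclideanSpace ℝ (Fin N))
    (hv : ∀ t ∈ Set.Icc (0:ℝ) T, ‖v t‖ = 1)
    (hx : ∀ t ∈ Set.Icc (0:ℝ) T,
      HasDerivWithinAt x
        (β • (F (x t) - (2 * ⟪v t, F (x t)⟫_ℝ) • v t)) (Set.Icc (0:ℝ) T) t) :
    ∃ Q : ℝ, 0 < Q ∧
      ∀ (NT : ℕ), 0 < NT → ∀ τ : ℝ, τ = T / NT →
        ∀ (X V : ℕ → EuclideanSpace ℝ (Fin N)),
          X 0 = x 0 → V 0 = v 0 →
          (∀ n ≤ NT, ‖V n‖ = 1) →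
          (∀ n, 1 ≤ n → n ≤ NT →
            X n = X (n - 1) + (τ * β) •
              (F (X (n - 1)) - (2 * ⟪V (n - 1), F (X (n - 1))⟫_ℝ) • V (n - 1))) →
          (∀ n, 1 ≤ n → n ≤ NT →
            ‖x ((n:ℝ) * τ) - x (((n - 1 : ℕ) : ℝ) * τ) - (τ * β) •
              (F (x (((n - 1 : ℕ) : ℝ) * τ)) -
                (2 * ⟪v (((n - 1 : ℕ) : ℝ) * τ), F (x (((n - 1 : ℕ) : ℝ) * τ))⟫_ℝ) •
                  v (((n - 1 : ℕ) : ℝ) * τ))‖ ≤ C₀ * τ ^ 2) →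
          ∀ n, 1 ≤ n → n ≤ NT →
            ‖x ((n:ℝ) * τ) - X n‖ ≤
              Q * τ * (∑ m ∈ Finset.Icc 1 (n - 1), ‖v ((m:ℝ) * τ) - V m‖) + Q * τ := by
  set A : ℝ := 3 * β * L with hA
  have hA0 : 0 < A := by positivity
  set K : ℝ := A + C₀ * T with hK
  have hK0 : 0 < K := by positivity
  set M : ℝ := Real.exp (K * T) * (‖x 0‖ + 1) with hMdef
  have hM0 : 0 < M := by positivity
  set B : ℝ := 4 * β * L * (1 + M) with hBdef
  have hB0 : 0 < B := by positivity
  have hE0 : (0:ℝ) < Real.exp (A * T) := Real.exp_pos _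
  have hQ0 : 0 < Real.exp (A * T) * (B + C₀ * T) := by
    have := mul_pos hC₀ hT
    nlinarith
  refine ⟨Real.exp (A * T) * (B + C₀ * T), hQ0, ?_⟩
  clear_value A
  have hCT0 : 0 < C₀ * T := mul_pos hC₀ hT
  clear_value K M B
  intro NT hNT τ hτ X V hX0 hV0 hVn hXrec htr
  have hNT1 : (1:ℝ) ≤ (NT:ℝ) := by exact_mod_cast hNT
  have hτ0 : 0 < τ := by rw [hτ]; positivity
  have hτT : τ * NT = T := by rw [hτ]; field_simp
  have hτleT : τ ≤ T := by
    have h := mul_le_mul_of_nonneg_left hNT1 hτ0.le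
    linarith
  have hτn : ∀ m : ℕ, m ≤ NT → τ * m ≤ T := by
    intro m hm
    have h1 : (m:ℝ) ≤ (NT:ℝ) := by exact_mod_cast hm
    have h := mul_le_mul_of_nonneg_left h1 hτ0.le
    linarith
  have hgrid : ∀ m ≤ NT, (m:ℝ) * τ ∈ Set.Icc (0:ℝ) T := by
    intro m hm
    exact ⟨by positivity, by linarith [hτn m hm]⟩
  have hexpbd : ∀ m : ℕ, m ≤ NT → ∀ c : ℝ, 0 < c →
      (1 + c * τ) ^ m ≤ Real.exp (c * T) := by
    intro m hm c hc
    calc (1 + c * τ) ^ m ≤ Real.exp (c * τ) ^ m := by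
          have hb : (0:ℝ) ≤ 1 + c * τ := by positivity
          have hbe : 1 + c * τ ≤ Real.exp (c * τ) := by
            linarith [Real.add_one_le_exp (c * τ)]
          exact pow_le_pow_left₀ hb hbe m
      _ = Real.exp (c * τ * m) := by rw [← Real.exp_nat_mul]; congr 1; ring
      _ ≤ Real.exp (c * T) := by
          apply Real.exp_le_exp.2
          have h := mul_le_mul_of_nonneg_left (hτn m hm) hc.le
          linarith
  have hq1 : C₀ * τ ^ 2 ≤ C₀ * T * τ := by
    have h := mul_le_mul_of_nonneg_left hτleT (mul_pos hC₀ hτ0).le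
    nlinarith
  -- bound on ‖x (mτ)‖ along the grid
  have hxg : ∀ m, m ≤ NT → ‖x ((m:ℝ) * τ)‖ + 1 ≤ (1 + K * τ) ^ m * (‖x 0‖ + 1) := by
    intro m
    induction m with
    | zero => intro _; simp
    | succ m ih =>
      intro hm
      have ihm := ih (by omega)
      have htm := htr (m + 1) (by omega) hm
      simp only [Nat.add_sub_cancel] at htm
      have hvm : ‖v ((m:ℝ) * τ)‖ = 1 := hv _ (hgrid m (by omega))
      have hG := g_bound (F (x ((m:ℝ) * τ))) (v ((m:ℝ) * τ)) hvm
      have hFb := hFg (x ((m:ℝ) * τ))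
      set t0 := (m:ℝ) * τ with ht0
      set t1 := ((m + 1 : ℕ):ℝ) * τ with ht1
      set G := F (x t0) - (2 * ⟪v t0, F (x t0)⟫_ℝ) • v t0 with hGdef
      clear_value t0 t1 G
      have h1 : ‖x t1‖ ≤ ‖x t1 - x t0 - (τ * β) • G‖ + (‖x t0‖ + ‖(τ * β) • G‖) :=
        calc ‖x t1‖ = ‖(x t1 - x t0 - (τ * β) • G) + (x t0 + (τ * β) • G)‖ := by
              congr 1; abel
          _ ≤ ‖x t1 - x t0 - (τ * β) • G‖ + ‖x t0 + (τ * β) • G‖ := norm_add_le _ _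
          _ ≤ _ := by gcongr; exact norm_add_le _ _
      have hsm : ‖(τ * β) • G‖ ≤ τ * β * (3 * (L * (1 + ‖x t0‖))) := by
        rw [norm_smul, Real.norm_eq_abs, abs_of_pos (mul_pos hτ0 hβ)]
        have hGb : ‖G‖ ≤ 3 * (L * (1 + ‖x t0‖)) := hG.trans (by linarith)
        exact mul_le_mul_of_nonneg_left hGb (by positivity)
      have hq2 : (0:ℝ) ≤ C₀ * T * τ * ‖x t0‖ := by positivity
      have hstep : ‖x t1‖ + 1 ≤ (1 + K * τ) * (‖x t0‖ + 1) := by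
        rw [hK, hA]
        nlinarith [htm, h1, hsm, hq1, hq2, norm_nonneg (x t0)]
      calc ‖x t1‖ + 1 ≤ (1 + K * τ) * (‖x t0‖ + 1) := hstep
        _ ≤ (1 + K * τ) * ((1 + K * τ) ^ m * (‖x 0‖ + 1)) := by
            have hKτ : (0:ℝ) ≤ 1 + K * τ := by positivity
            exact mul_le_mul_of_nonneg_left ihm hKτ
        _ = (1 + K * τ) ^ (m + 1) * (‖x 0‖ + 1) := by ring
  have hxM : ∀ m, m ≤ NT → ‖x ((m:ℝ) * τ)‖ ≤ M := by
    intro m hm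
    have h1 := hxg m hm
    have h2 := hexpbd m hm K hK0
    have h3 : (1 + K * τ) ^ m * (‖x 0‖ + 1) ≤ M := by
      rw [hMdef]
      exact mul_le_mul_of_nonneg_right h2 (by positivity)
    linarith
  -- main error recursion
  have key : ∀ m, m ≤ NT → ‖x ((m:ℝ) * τ) - X m‖ ≤
      (1 + A * τ) ^ m *
        (B * τ * (∑ k ∈ Finset.Icc 1 (m - 1), ‖v ((k:ℝ) * τ) - V k‖) + C₀ * τ ^ 2 * m) := by
    intro m
    induction m with
    | zero => intro _; simp [hX0]
    | succ m ih =>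
      intro hm
      have ihm := ih (by omega)
      have htm := htr (m + 1) (by omega) hm
      have hXs := hXrec (m + 1) (by omega) hm
      simp only [Nat.add_sub_cancel] at htm hXs
      have hvm : ‖v ((m:ℝ) * τ)‖ = 1 := hv _ (hgrid m (by omega))
      have hVm : ‖V m‖ = 1 := hVn m (by omega)
      -- sum identity
      have hS : (∑ k ∈ Finset.Icc 1 (m + 1 - 1), ‖v ((k:ℝ) * τ) - V k‖)
          = (∑ k ∈ Finset.Icc 1 (m - 1), ‖v ((k:ℝ) * τ) - V k‖)
            + ‖v ((m:ℝ) * τ) - V m‖ := by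
        simp only [Nat.add_sub_cancel]
        cases m with
        | zero => simp [hV0]
        | succ k =>
          rw [Nat.succ_sub_one]
          exact Finset.sum_Icc_succ_top (by omega) _
      set t0 := (m:ℝ) * τ with ht0
      set t1 := ((m + 1 : ℕ):ℝ) * τ with ht1
      set Ga := F (x t0) - (2 * ⟪v t0, F (x t0)⟫_ℝ) • v t0 with hGa
      set Gb := F (X m) - (2 * ⟪V m, F (X m)⟫_ℝ) • V m with hGb
      have hid : x t1 - X (m + 1)
          = (x t1 - x t0 - (τ * β) • Ga) + (x t0 - X m) + (τ * β) • (Ga - Gb) := by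
        rw [hXs]; module
      have hgd : ‖Ga - Gb‖ ≤ 3 * ‖F (x t0) - F (X m)‖ + 4 * ‖F (x t0)‖ * ‖v t0 - V m‖ :=
        gdiff_bound _ _ _ _ hvm hVm
      clear_value t0 t1 Ga Gb
      have hFa : ‖F (x t0)‖ ≤ L * (1 + M) := by
        calc ‖F (x t0)‖ ≤ L * (1 + ‖x t0‖) := hFg _
          _ ≤ L * (1 + M) := by
              have h' := hxM m (by omega)
              rw [← ht0] at h'
              have h'' : 1 + ‖x t0‖ ≤ 1 + M := by linarith
              exact mul_le_mul_of_nonneg_left h'' hL.le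
      have hgd2 : ‖Ga - Gb‖ ≤ 3 * (L * ‖x t0 - X m‖) + 4 * (L * (1 + M)) * ‖v t0 - V m‖ := by
        refine hgd.trans ?_
        have g1 := hFlip (x t0) (X m)
        have g2 := mul_le_mul_of_nonneg_right hFa (norm_nonneg (v t0 - V m))
        nlinarith [g1, g2]
      have hrec : ‖x t1 - X (m + 1)‖ ≤
          (1 + A * τ) * ‖x t0 - X m‖ + B * τ * ‖v t0 - V m‖ + C₀ * τ ^ 2 := by
        calc ‖x t1 - X (m + 1)‖
            ≤ ‖x t1 - x t0 - (τ * β) • Ga‖ + ‖x t0 - X m‖ + ‖(τ * β) • (Ga - Gb)‖ := by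
              rw [hid]; exact norm_add₃_le
          _ ≤ C₀ * τ ^ 2 + ‖x t0 - X m‖ +
              τ * β * (3 * (L * ‖x t0 - X m‖) + 4 * (L * (1 + M)) * ‖v t0 - V m‖) := by
              have hsm2 : ‖(τ * β) • (Ga - Gb)‖ ≤
                  τ * β * (3 * (L * ‖x t0 - X m‖) + 4 * (L * (1 + M)) * ‖v t0 - V m‖) := by
                rw [norm_smul, Real.norm_eq_abs, abs_of_pos (mul_pos hτ0 hβ)]
                exact mul_le_mul_of_nonneg_left hgd2 (mul_pos hτ0 hβ).le
              linarith [htm, hsm2]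
          _ = (1 + A * τ) * ‖x t0 - X m‖ + B * τ * ‖v t0 - V m‖ + C₀ * τ ^ 2 := by
              rw [hA, hBdef]; ring
      have hone : (1:ℝ) ≤ (1 + A * τ) ^ (m + 1) :=
        one_le_pow₀ (by nlinarith [mul_pos hA0 hτ0])
      set S := ∑ k ∈ Finset.Icc 1 (m - 1), ‖v ((k:ℝ) * τ) - V k‖ with hSdef
      have hS0 : 0 ≤ S := Finset.sum_nonneg fun _ _ => norm_nonneg _
      have hd0 : 0 ≤ ‖v t0 - V m‖ := norm_nonneg _
      calc ‖x t1 - X (m + 1)‖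
          ≤ (1 + A * τ) * ‖x t0 - X m‖ + B * τ * ‖v t0 - V m‖ + C₀ * τ ^ 2 := hrec
        _ ≤ (1 + A * τ) * ((1 + A * τ) ^ m * (B * τ * S + C₀ * τ ^ 2 * m))
              + B * τ * ‖v t0 - V m‖ + C₀ * τ ^ 2 := by
            have hp : (0:ℝ) ≤ 1 + A * τ := by positivity
            have h' := mul_le_mul_of_nonneg_left ihm hp
            linarith
        _ ≤ (1 + A * τ) ^ (m + 1) * (B * τ * S + C₀ * τ ^ 2 * m)
              + (1 + A * τ) ^ (m + 1) * (B * τ * ‖v t0 - V m‖ + C₀ * τ ^ 2) := by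
            have e1 : (1 + A * τ) * ((1 + A * τ) ^ m * (B * τ * S + C₀ * τ ^ 2 * m))
                = (1 + A * τ) ^ (m + 1) * (B * τ * S + C₀ * τ ^ 2 * m) := by ring
            have e2 : B * τ * ‖v t0 - V m‖ + C₀ * τ ^ 2
                ≤ (1 + A * τ) ^ (m + 1) * (B * τ * ‖v t0 - V m‖ + C₀ * τ ^ 2) :=
              le_mul_of_one_le_left (by positivity) hone
            linarith
        _ = (1 + A * τ) ^ (m + 1) *
              (B * τ * (S + ‖v t0 - V m‖) + C₀ * τ ^ 2 * (m + 1)) := by ring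
        _ = (1 + A * τ) ^ (m + 1) *
              (B * τ * (∑ k ∈ Finset.Icc 1 (m + 1 - 1), ‖v ((k:ℝ) * τ) - V k‖)
                + C₀ * τ ^ 2 * ((m + 1 : ℕ):ℝ)) := by
            rw [hS, hSdef]; push_cast; ring
  -- conclusion
  intro n hn1 hnNT
  have hkey := key n hnNT
  set S := ∑ m ∈ Finset.Icc 1 (n - 1), ‖v ((m:ℝ) * τ) - V m‖ with hSdef
  have hS0 : 0 ≤ S := Finset.sum_nonneg fun _ _ => norm_nonneg _
  have hEp := hexpbd n hnNT A hA0
  have h1 : (1 + A * τ) ^ n * (B * τ * S + C₀ * τ ^ 2 * n)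
      ≤ Real.exp (A * T) * (B * τ * S + C₀ * τ ^ 2 * n) := by
    have hbr : (0:ℝ) ≤ B * τ * S + C₀ * τ ^ 2 * n := by positivity
    exact mul_le_mul_of_nonneg_right hEp hbr
  have h2 : C₀ * τ ^ 2 * n ≤ C₀ * T * τ := by
    have h := mul_le_mul_of_nonneg_left (hτn n hnNT) (mul_pos hC₀ hτ0).le
    nlinarith
  have h3 : Real.exp (A * T) * (B * τ * S + C₀ * τ ^ 2 * n)
      ≤ Real.exp (A * T) * (B * τ * S + C₀ * T * τ) := by
    have h' : B * τ * S + C₀ * τ ^ 2 * n ≤ B * τ * S + C₀ * T * τ := by linarith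
    exact mul_le_mul_of_nonneg_left h' hE0.le
  have h4 : Real.exp (A * T) * (B * τ * S + C₀ * T * τ)
      = Real.exp (A * T) * B * τ * S + Real.exp (A * T) * (C₀ * T) * τ := by ring
  have h5 : Real.exp (A * T) * B * τ * S ≤ Real.exp (A * T) * (B + C₀ * T) * τ * S := by
    have hb : B ≤ B + C₀ * T := by linarith
    have h' := mul_le_mul_of_nonneg_right
      (mul_le_mul_of_nonneg_left hb hE0.le) hτ0.le
    exact mul_le_mul_of_nonneg_right (by nlinarith) hS0
  have h6 : Real.exp (A * T) * (C₀ * T) * τ ≤ Real.exp (A * T) * (B + C₀ * T) * τ := by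
    have hb : C₀ * T ≤ B + C₀ * T := by linarith
    have h' := mul_le_mul_of_nonneg_left hb hE0.le
    nlinarith
  linarith [hkey]
end

section
/- Let N ≥ 1, T, β, γ, L, C₀ > 0. Let F : ℝ^N → ℝ^N satisfy ‖F(a) - F(b)‖ ≤ L‖a - b‖ and ‖F(y)‖ ≤ L(1 + ‖y‖), and let J map ℝ^N to linear maps on ℝ^N with ‖J(a) - J(b)‖ ≤ L‖a - b‖ (operator norm). Let x, v : ℝ → ℝ^N satisfy ‖v(t)‖ = 1 on [0,T] and the index-1 saddle dynamics x'(t) = β(I - 2 v(t)v(t)ᵀ)F(x(t)), v'(t) = γ(I - v(t)v(t)ᵀ)J(x(t))v(t) on [0,T]. Then there exists Q > 0, depending only on β, γ, L, T, C₀, ‖x(0)‖ and ‖J(0)‖ (and not on the time step), such that: for every positive integer N_T, setting τ = T/N_T and t_n = nτ, if (x_n), (ṽ_n), (v_n) are sequences in ℝ^N with x_0 = x(0), v_0 = v(0), and for 1 ≤ n ≤ N_T: x_n = x_{n-1} + τβ(I - 2v_{n-1}v_{n-1}ᵀ)F(x_{n-1}), ṽ_n = v_{n-1} + τγ(I - v_{n-1}v_{n-1}ᵀ)J(x_{n-1})v_{n-1},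 v_n = ṽ_n/‖ṽ_n‖, and the truncation bounds ‖x(t_n) - x(t_{n-1}) - τ x'(t_{n-1})‖ ≤ C₀τ² and ‖v(t_n) - v(t_{n-1}) - τ v'(t_{n-1})‖ ≤ C₀τ² hold, then ‖x(t_n) - x_n‖ + ‖v(t_n) - v_n‖ ≤ Q τ for all 1 ≤ n ≤ N_T. -/
set_option maxHeartbeats 1000000
set_option synthInstance.maxHeartbeats 200000
open scoped InnerProductSpace

section aux
variable {E : Type*} [NormedAddCommGroup E] [InnerProductSpace ℝ E]

lemma aux_lipG (a b w w' : E) (hw : ‖w‖ ≤ 1) (hw' : ‖w'‖ ≤ 1) :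
    ‖(a - (2 * ⟪w, a⟫_ℝ) • w) - (b - (2 * ⟪w', b⟫_ℝ) • w')‖ ≤
      3 * ‖a - b‖ + 4 * ‖a‖ * ‖w - w'‖ := by
  have h1 : (a - (2 * ⟪w, a⟫_ℝ) • w) - (b - (2 * ⟪w', b⟫_ℝ) • w')
      = (a - b) - ((2 * ⟪w, a⟫_ℝ) • (w - w') + (2 * (⟪w, a⟫_ℝ - ⟪w', b⟫_ℝ)) • w') := by
    module
  have h2 : ⟪w, a⟫_ℝ - ⟪w', b⟫_ℝ = ⟪w - w', a⟫_ℝ + ⟪w', a - b⟫_ℝ := by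
    rw [inner_sub_left, inner_sub_right]; ring
  have i1 : |⟪w, a⟫_ℝ| ≤ ‖a‖ := by
    have := abs_real_inner_le_norm w a
    nlinarith [norm_nonneg a]
  have i2 : |⟪w - w', a⟫_ℝ| ≤ ‖w - w'‖ * ‖a‖ := abs_real_inner_le_norm _ _
  have i3 : |⟪w', a - b⟫_ℝ| ≤ ‖a - b‖ := by
    have := abs_real_inner_le_norm w' (a - b)
    nlinarith [norm_nonneg (a - b)]
  calc ‖(a - (2 * ⟪w, a⟫_ℝ) • w) - (b - (2 * ⟪w', b⟫_ℝ) • w')‖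
      ≤ ‖a - b‖ + (‖(2 * ⟪w, a⟫_ℝ) • (w - w')‖ + ‖(2 * (⟪w, a⟫_ℝ - ⟪w', b⟫_ℝ)) • w'‖) := by
        rw [h1]; exact (norm_sub_le _ _).trans (by gcongr; exact norm_add_le _ _)
    _ ≤ 3 * ‖a - b‖ + 4 * ‖a‖ * ‖w - w'‖ := by
        simp only [norm_smul, Real.norm_eq_abs, abs_mul, abs_two]
        have e1 : |⟪w, a⟫_ℝ| * ‖w - w'‖ ≤ ‖a‖ * ‖w - w'‖ := by
          exact mul_le_mul_of_nonneg_right i1 (norm_nonneg _)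
        have e2 : |⟪w, a⟫_ℝ - ⟪w', b⟫_ℝ| ≤ ‖w - w'‖ * ‖a‖ + ‖a - b‖ := by
          rw [h2]; exact (abs_add_le _ _).trans (add_le_add i2 i3)
        have e3 : |⟪w, a⟫_ℝ - ⟪w', b⟫_ℝ| * ‖w'‖ ≤ |⟪w, a⟫_ℝ - ⟪w', b⟫_ℝ| * 1 := by
          exact mul_le_mul_of_nonneg_left hw' (abs_nonneg _)
        nlinarith [norm_nonneg (w - w'), norm_nonneg (a - b), abs_nonneg (⟪w, a⟫_ℝ - ⟪w', b⟫_ℝ)]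

lemma aux_lipH (p q w w' : E) (hw : ‖w‖ ≤ 1) (hw' : ‖w'‖ ≤ 1) :
    ‖(p - ⟪w, p⟫_ℝ • w) - (q - ⟪w', q⟫_ℝ • w')‖ ≤
      2 * ‖p - q‖ + 2 * ‖p‖ * ‖w - w'‖ := by
  have h1 : (p - ⟪w, p⟫_ℝ • w) - (q - ⟪w', q⟫_ℝ • w')
      = (p - q) - (⟪w, p⟫_ℝ • (w - w') + (⟪w, p⟫_ℝ - ⟪w', q⟫_ℝ) • w') := by
    module
  have h2 : ⟪w, p⟫_ℝ - ⟪w', q⟫_ℝ = ⟪w - w', p⟫_ℝ + ⟪w', p - q⟫_ℝ := by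
    rw [inner_sub_left, inner_sub_right]; ring
  have i1 : |⟪w, p⟫_ℝ| ≤ ‖p‖ := by
    have := abs_real_inner_le_norm w p
    nlinarith [norm_nonneg p]
  have i3 : |⟪w', p - q⟫_ℝ| ≤ ‖p - q‖ := by
    have := abs_real_inner_le_norm w' (p - q)
    nlinarith [norm_nonneg (p - q)]
  calc ‖(p - ⟪w, p⟫_ℝ • w) - (q - ⟪w', q⟫_ℝ • w')‖
      ≤ ‖p - q‖ + (‖⟪w, p⟫_ℝ • (w - w')‖ + ‖(⟪w, p⟫_ℝ - ⟪w', q⟫_ℝ) • w'‖) := by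
        rw [h1]; exact (norm_sub_le _ _).trans (by gcongr; exact norm_add_le _ _)
    _ ≤ 2 * ‖p - q‖ + 2 * ‖p‖ * ‖w - w'‖ := by
        simp only [norm_smul, Real.norm_eq_abs]
        have e2 : |⟪w, p⟫_ℝ - ⟪w', q⟫_ℝ| ≤ ‖w - w'‖ * ‖p‖ + ‖p - q‖ := by
          rw [h2]
          exact (abs_add_le _ _).trans (add_le_add (abs_real_inner_le_norm _ _) i3)
        have e3 : |⟪w, p⟫_ℝ - ⟪w', q⟫_ℝ| * ‖w'‖ ≤ |⟪w, p⟫_ℝ - ⟪w', q⟫_ℝ| * 1 := by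
          exact mul_le_mul_of_nonneg_left hw' (abs_nonneg _)
        nlinarith [norm_nonneg (w - w'), norm_nonneg (p - q), abs_nonneg (⟪w, p⟫_ℝ - ⟪w', q⟫_ℝ)]

end aux

lemma sc_ge_one (u s : ℝ) (h : u^2 = 1 + s^2) (hu : 0 ≤ u) : 1 ≤ u := by
  nlinarith [sq_nonneg s]

lemma sc_normerr (u s b : ℝ) (h : u^2 = 1 + s^2) (hu : 1 ≤ u) (hs : 0 ≤ s) (hsb : s ≤ b) :
    u - 1 ≤ b^2/2 := by
  nlinarith [sq_nonneg (u - 1)]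

lemma sc_lipG (g fa d ex ev LL M : ℝ) (h1 : g ≤ 3*d + 4*fa*ev) (h2 : d ≤ LL*ex)
    (h3 : fa ≤ M) (hex : 0 ≤ ex) (hev : 0 ≤ ev) (hLL : 0 ≤ LL) (hM : 0 ≤ M) (hfa : 0 ≤ fa) :
    g ≤ (3*LL + 4*M)*(ex+ev) := by nlinarith

lemma sc_lipH (g p d ex ev LL M : ℝ) (h1 : g ≤ 2*d + 2*p*ev) (hd : d ≤ LL*ex + M*ev)
    (hp : p ≤ M) (hex : 0 ≤ ex) (hev : 0 ≤ ev) (hLL : 0 ≤ LL) (hM : 0 ≤ M) (hp0 : 0 ≤ p) :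
    g ≤ (2*LL + 4*M)*(ex+ev) := by nlinarith


/-- Theorem 3.2 of the paper: first-order convergence of the explicit Euler scheme
for index-1 saddle dynamics. -/
theorem first_order_convergence_euler_1SD (N : ℕ) (hN : 1 ≤ N)
    (T β γ L C₀ : ℝ) (hT : 0 < T) (hβ : 0 < β) (hγ : 0 < γ) (hL : 0 < L) (hC₀ : 0 < C₀)
    (F : EuclideanSpace ℝ (Fin N) → EuclideanSpace ℝ (Fin N))
    (hFlip : ∀ a b, ‖F a - F b‖ ≤ L * ‖a - b‖)
    (hFg : ∀ y, ‖F y‖ ≤ L * (1 + ‖y‖))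
    (J : EuclideanSpace ℝ (Fin N) →
      EuclideanSpace ℝ (Fin N) →L[ℝ] EuclideanSpace ℝ (Fin N))
    (hJlip : ∀ a b, ‖J a - J b‖ ≤ L * ‖a - b‖)
    (x v : ℝ → EuclideanSpace ℝ (Fin N))
    (hv : ∀ t ∈ Set.Icc (0:ℝ) T, ‖v t‖ = 1)
    (hx : ∀ t ∈ Set.Icc (0:ℝ) T,
      HasDerivWithinAt x
        (β • (F (x t) - (2 * ⟪v t, F (x t)⟫_ℝ) • v t)) (Set.Icc (0:ℝ) T) t)
    (hvd : ∀ t ∈ Set.Icc (0:ℝ) T,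
      HasDerivWithinAt v
        (γ • (J (x t) (v t) - ⟪v t, J (x t) (v t)⟫_ℝ • v t)) (Set.Icc (0:ℝ) T) t) :
    ∃ Q : ℝ, 0 < Q ∧
      ∀ (NT : ℕ), 0 < NT → ∀ τ : ℝ, τ = T / NT →
        ∀ (X Vt V : ℕ → EuclideanSpace ℝ (Fin N)),
          X 0 = x 0 → V 0 = v 0 →
          (∀ n, 1 ≤ n → n ≤ NT →
            X n = X (n - 1) + (τ * β) •
              (F (X (n - 1)) - (2 * ⟪V (n - 1), F (X (n - 1))⟫_ℝ) • V (n - 1))) →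
          (∀ n, 1 ≤ n → n ≤ NT →
            Vt n = V (n - 1) + (τ * γ) •
              (J (X (n - 1)) (V (n - 1)) -
                ⟪V (n - 1), J (X (n - 1)) (V (n - 1))⟫_ℝ • V (n - 1))) →
          (∀ n, 1 ≤ n → n ≤ NT → V n = ‖Vt n‖⁻¹ • Vt n) →
          (∀ n, 1 ≤ n → n ≤ NT →
            ‖x ((n:ℝ) * τ) - x (((n - 1 : ℕ) : ℝ) * τ) - τ •
              (β • (F (x (((n - 1 : ℕ) : ℝ) * τ)) -
                (2 * ⟪v (((n - 1 : ℕ) : ℝ) * τ), F (x (((n - 1 : ℕ) : ℝ) * τ))⟫_ℝ) •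
                  v (((n - 1 : ℕ) : ℝ) * τ)))‖ ≤ C₀ * τ ^ 2) →
          (∀ n, 1 ≤ n → n ≤ NT →
            ‖v ((n:ℝ) * τ) - v (((n - 1 : ℕ) : ℝ) * τ) - τ •
              (γ • (J (x (((n - 1 : ℕ) : ℝ) * τ)) (v (((n - 1 : ℕ) : ℝ) * τ)) -
                ⟪v (((n - 1 : ℕ) : ℝ) * τ),
                  J (x (((n - 1 : ℕ) : ℝ) * τ)) (v (((n - 1 : ℕ) : ℝ) * τ))⟫_ℝ •
                    v (((n - 1 : ℕ) : ℝ) * τ)))‖ ≤ C₀ * τ ^ 2) →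
          ∀ n, 1 ≤ n → n ≤ NT →
            ‖x ((n:ℝ) * τ) - X n‖ + ‖v ((n:ℝ) * τ) - V n‖ ≤ Q * τ := by
  have h0T : (0:ℝ) ∈ Set.Icc (0:ℝ) T := ⟨le_refl 0, hT.le⟩
  have hxc : ContinuousOn x (Set.Icc (0:ℝ) T) := fun t ht => (hx t ht).continuousWithinAt
  obtain ⟨Mx, hMx⟩ := isCompact_Icc.exists_bound_of_continuousOn hxc
  have hMxpos : 0 ≤ Mx := le_trans (norm_nonneg (x 0)) (hMx 0 h0T)
  set MX := (Mx + 1) * Real.exp (3 * β * L * T) with hMXdef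
  have hexp1 : (1:ℝ) ≤ Real.exp (3 * β * L * T) :=
    Real.one_le_exp (mul_nonneg (mul_nonneg (by linarith) hL.le) hT.le)
  have hMxMX : Mx + 1 ≤ MX := le_mul_of_one_le_right (by linarith) hexp1
  have hMXpos : 0 < MX := mul_pos (by linarith) (Real.exp_pos _)
  set MF := L * (1 + MX) with hMFdef
  have hMFpos : 0 < MF := mul_pos hL (by linarith)
  set MJ := ‖J 0‖ + L * MX with hMJdef
  have hMJpos : 0 < MJ := by
    have := mul_pos hL hMXpos
    have := norm_nonneg (J 0)
    rw [hMJdef]; linarith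
  set A := 3 * L + 4 * MF with hAdef
  have hApos : 0 < A := by rw [hAdef]; linarith
  set B := 2 * L + 4 * MJ with hBdef
  have hBpos : 0 < B := by rw [hBdef]; linarith
  set K := β * A + γ * B with hKdef
  have hKpos : 0 < K := by
    have h1 := mul_pos hβ hApos; have h2 := mul_pos hγ hBpos
    rw [hKdef]; linarith
  set C := 2 * C₀ + 2 * γ^2 * MJ^2 with hCdef
  have hCpos : 0 < C := by
    have h1 : (0:ℝ) ≤ 2 * γ^2 * MJ^2 := by positivity
    rw [hCdef]; linarith
  refine ⟨C * T * Real.exp (K * T), mul_pos (mul_pos hCpos hT) (Real.exp_pos _), ?_⟩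
  intro NT hNT τ hτ X Vt V hX0 hV0 hXdef hVtdef hVdef htrx htrv
  have hNT0 : (0:ℝ) < NT := by exact_mod_cast hNT
  have hτpos : 0 < τ := by rw [hτ]; exact div_pos hT hNT0
  have hNTτ : (NT:ℝ) * τ = T := by rw [hτ]; field_simp
  have hτle : ∀ m : ℕ, m ≤ NT → (m:ℝ) * τ ≤ T := by
    intro m hm
    calc (m:ℝ) * τ ≤ (NT:ℝ) * τ := by
          apply mul_le_mul_of_nonneg_right _ hτpos.le
          exact_mod_cast hm
      _ = T := hNTτ
  have hgrid : ∀ m : ℕ, m ≤ NT → ((m:ℝ) * τ) ∈ Set.Icc (0:ℝ) T := by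
    intro m hm
    exact ⟨mul_nonneg (Nat.cast_nonneg m) hτpos.le, hτle m hm⟩
  have hpowexp : ∀ c : ℝ, 0 ≤ c → ∀ m : ℕ, m ≤ NT →
      (1 + c * τ)^m ≤ Real.exp (c * T) := by
    intro c hc m hm
    have h1 : (1 + c*τ) ≤ Real.exp (c*τ) := by
      have := Real.add_one_le_exp (c*τ); linarith
    have h0 : (0:ℝ) ≤ 1 + c*τ := by have := mul_nonneg hc hτpos.le; linarith
    calc (1 + c*τ)^m ≤ (Real.exp (c*τ))^m := pow_le_pow_left₀ h0 h1 m
      _ = Real.exp ((m:ℝ) * (c*τ)) := (Real.exp_nat_mul _ m).symm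
      _ ≤ Real.exp (c*T) := by
          apply Real.exp_le_exp.mpr
          have he : (m:ℝ)*(c*τ) = c * ((m:ℝ)*τ) := by ring
          rw [he]; exact mul_le_mul_of_nonneg_left (hτle m hm) hc
  have hJbound : ∀ y : EuclideanSpace ℝ (Fin N), ‖y‖ ≤ MX → ‖J y‖ ≤ MJ := by
    intro y hy
    have h1 : ‖J y - J 0‖ ≤ L * ‖y‖ := by
      have h := hJlip y 0; rwa [sub_zero] at h
    have h2 : ‖J y‖ ≤ ‖J 0‖ + ‖J y - J 0‖ := norm_le_norm_add_norm_sub' (J y) (J 0)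
    have h3 : L*‖y‖ ≤ L*MX := mul_le_mul_of_nonneg_left hy hL.le
    rw [hMJdef]; linarith only [h1, h2, h3]
  -- main induction
  have main : ∀ m : ℕ, m ≤ NT →
      ‖V m‖ = 1 ∧ ‖X m‖ + 1 ≤ (Mx + 1) * (1 + (3*β*L) * τ)^m ∧
      ‖x ((m:ℝ)*τ) - X m‖ + ‖v ((m:ℝ)*τ) - V m‖ ≤ C * τ^2 * m * (1 + K*τ)^m := by
    intro m
    induction m with
    | zero =>
      intro _
      refine ⟨by rw [hV0]; exact hv 0 h0T, ?_, ?_⟩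
      · simp only [pow_zero, mul_one, hX0]
        linarith [hMx 0 h0T]
      · simp [hX0, hV0]
    | succ m ih =>
      intro hm1
      have hm : m ≤ NT := Nat.le_of_succ_le hm1
      obtain ⟨ihV, ihX, ihE⟩ := ih hm
      have hXs := hXdef (m+1) (by omega) hm1
      have hVts := hVtdef (m+1) (by omega) hm1
      have hVs := hVdef (m+1) (by omega) hm1
      have htrX := htrx (m+1) (by omega) hm1
      have htrV := htrv (m+1) (by omega) hm1
      simp only [Nat.add_sub_cancel] at hXs hVts hVs htrX htrV
      have hXmb : ‖X m‖ ≤ MX := by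
        have hp := hpowexp (3*β*L) (mul_nonneg (mul_nonneg (by norm_num) hβ.le) hL.le) m hm
        have h2 : (Mx+1)*(1+(3*β*L)*τ)^m ≤ MX := by
          rw [hMXdef]
          exact mul_le_mul_of_nonneg_left hp (by linarith)
        linarith
      have hxmb : ‖x ((m:ℝ)*τ)‖ ≤ Mx := hMx _ (hgrid m hm)
      have hvm : ‖v ((m:ℝ)*τ)‖ = 1 := hv _ (hgrid m hm)
      have hJXm : ‖J (X m)‖ ≤ MJ := hJbound _ hXmb
      have hJxm : ‖J (x ((m:ℝ)*τ))‖ ≤ MJ := hJbound _ (le_trans hxmb (by linarith))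
      have hFxm : ‖F (x ((m:ℝ)*τ))‖ ≤ MF := by
        calc ‖F (x ((m:ℝ)*τ))‖ ≤ L * (1 + ‖x ((m:ℝ)*τ)‖) := hFg _
          _ ≤ MF := by
              rw [hMFdef]
              apply mul_le_mul_of_nonneg_left _ hL.le
              linarith
      -- part 1 : V norm
      have hVm2 : ⟪V m, V m⟫_ℝ = 1 := by
        rw [real_inner_self_eq_norm_sq, ihV]; norm_num
      have horth : ⟪V m, J (X m) (V m) - ⟪V m, J (X m) (V m)⟫_ℝ • V m⟫_ℝ = 0 := by
        rw [inner_sub_right, real_inner_smul_right, hVm2]; ring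
      have hqb : ‖J (X m) (V m)‖ ≤ MJ := by
        calc ‖J (X m) (V m)‖ ≤ ‖J (X m)‖ * ‖V m‖ := (J (X m)).le_opNorm _
          _ ≤ MJ := by rw [ihV, mul_one]; exact hJXm
      have hhb : ‖J (X m) (V m) - ⟪V m, J (X m) (V m)⟫_ℝ • V m‖ ≤ 2 * MJ := by
        have hi : |⟪V m, J (X m) (V m)⟫_ℝ| ≤ MJ := by
          have := abs_real_inner_le_norm (V m) (J (X m) (V m))
          rw [ihV, one_mul] at this; linarith
        calc ‖J (X m) (V m) - ⟪V m, J (X m) (V m)⟫_ℝ • V m‖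
            ≤ ‖J (X m) (V m)‖ + ‖⟪V m, J (X m) (V m)⟫_ℝ • V m‖ := norm_sub_le _ _
          _ ≤ MJ + MJ := by
              apply add_le_add hqb
              rw [norm_smul, Real.norm_eq_abs, ihV, mul_one]; exact hi
          _ = 2*MJ := by ring
      have hVtn2 : ‖Vt (m+1)‖^2 =
          1 + ‖(τ*γ) • (J (X m) (V m) - ⟪V m, J (X m) (V m)⟫_ℝ • V m)‖^2 := by
        rw [hVts, norm_add_sq_real, real_inner_smul_right, horth, ihV]; ring
      have hVtge : 1 ≤ ‖Vt (m+1)‖ :=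
        sc_ge_one _ _ hVtn2 (norm_nonneg _)
      have hVtne : ‖Vt (m+1)‖ ≠ 0 := by intro h; rw [h] at hVtge; linarith only [hVtge]
      have hV1 : ‖V (m+1)‖ = 1 := by
        rw [hVs, norm_smul, Real.norm_eq_abs, abs_inv, abs_of_nonneg (norm_nonneg _),
          inv_mul_cancel₀ hVtne]
      have hVerr : ‖Vt (m+1) - V (m+1)‖ ≤ 2 * γ^2 * MJ^2 * τ^2 := by
        have h1 : Vt (m+1) - V (m+1) = (1 - ‖Vt (m+1)‖⁻¹) • Vt (m+1) := by
          rw [hVs, sub_smul, one_smul]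
        have hinv : ‖Vt (m+1)‖⁻¹ ≤ 1 := inv_le_one_of_one_le₀ hVtge
        have h2 : ‖Vt (m+1) - V (m+1)‖ = ‖Vt (m+1)‖ - 1 := by
          rw [h1, norm_smul, Real.norm_eq_abs, abs_of_nonneg (by linarith)]
          field_simp
        rw [h2]
        have hτγ : (0:ℝ) ≤ τ*γ := (mul_pos hτpos hγ).le
        have hs : ‖(τ*γ) • (J (X m) (V m) - ⟪V m, J (X m) (V m)⟫_ℝ • V m)‖ ≤ τ*γ*(2*MJ) := by
          rw [norm_smul, Real.norm_eq_abs, abs_of_nonneg hτγ]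
          exact mul_le_mul_of_nonneg_left hhb hτγ
        have := sc_normerr _ _ _ hVtn2 hVtge (norm_nonneg _) hs
        calc ‖Vt (m+1)‖ - 1 ≤ (τ*γ*(2*MJ))^2/2 := this
          _ = 2 * γ^2 * MJ^2 * τ^2 := by ring
      -- part 2 : X bound
      have hgXb : ‖F (X m) - (2 * ⟪V m, F (X m)⟫_ℝ) • V m‖ ≤ 3 * (L * (1 + ‖X m‖)) := by
        have hFb := hFg (X m)
        have hi : |⟪V m, F (X m)⟫_ℝ| ≤ ‖F (X m)‖ := by
          have := abs_real_inner_le_norm (V m) (F (X m))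
          rw [ihV, one_mul] at this; linarith
        calc ‖F (X m) - (2 * ⟪V m, F (X m)⟫_ℝ) • V m‖
            ≤ ‖F (X m)‖ + ‖(2 * ⟪V m, F (X m)⟫_ℝ) • V m‖ := norm_sub_le _ _
          _ ≤ ‖F (X m)‖ + 2 * ‖F (X m)‖ := by
              apply add_le_add_right
              rw [norm_smul, Real.norm_eq_abs, abs_mul, abs_two, ihV, mul_one]
              linarith only [hi]
          _ ≤ 3 * (L * (1 + ‖X m‖)) := by linarith only [hFb]
      have ihX' : ‖X (m+1)‖ + 1 ≤ (Mx+1)*(1+(3*β*L)*τ)^(m+1) := by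
        have hn : ‖X (m+1)‖ ≤ ‖X m‖ + τ*β*(3*(L*(1+‖X m‖))) := by
          rw [hXs]
          calc ‖X m + (τ*β) • (F (X m) - (2 * ⟪V m, F (X m)⟫_ℝ) • V m)‖
              ≤ ‖X m‖ + ‖(τ*β) • (F (X m) - (2 * ⟪V m, F (X m)⟫_ℝ) • V m)‖ := norm_add_le _ _
            _ ≤ ‖X m‖ + τ*β*(3*(L*(1+‖X m‖))) := by
                apply add_le_add_right
                rw [norm_smul, Real.norm_eq_abs, abs_of_nonneg (mul_pos hτpos hβ).le]
                exact mul_le_mul_of_nonneg_left hgXb (mul_pos hτpos hβ).le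
        have hc3 : (0:ℝ) ≤ 1+(3*β*L)*τ := by
          have : (0:ℝ) < 3*β*L*τ := by
            apply mul_pos (mul_pos (mul_pos (by norm_num) hβ) hL) hτpos
          linarith only [this]
        calc ‖X (m+1)‖ + 1 ≤ (1+(3*β*L)*τ)*(‖X m‖+1) := by linarith only [hn]
          _ ≤ (1+(3*β*L)*τ)*((Mx+1)*(1+(3*β*L)*τ)^m) := by
              apply mul_le_mul_of_nonneg_left ihX hc3
          _ = (Mx+1)*(1+(3*β*L)*τ)^(m+1) := by ring
      -- part 3 : error propagation
      have hex0 : (0:ℝ) ≤ ‖x ((m:ℝ)*τ) - X m‖ := norm_nonneg _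
      have hev0 : (0:ℝ) ≤ ‖v ((m:ℝ)*τ) - V m‖ := norm_nonneg _
      have hgdiff : ‖(F (x ((m:ℝ)*τ)) - (2 * ⟪v ((m:ℝ)*τ), F (x ((m:ℝ)*τ))⟫_ℝ) • v ((m:ℝ)*τ)) -
          (F (X m) - (2 * ⟪V m, F (X m)⟫_ℝ) • V m)‖ ≤
          A * (‖x ((m:ℝ)*τ) - X m‖ + ‖v ((m:ℝ)*τ) - V m‖) := by
        have h1 := aux_lipG (F (x ((m:ℝ)*τ))) (F (X m)) (v ((m:ℝ)*τ)) (V m)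
          (le_of_eq hvm) (le_of_eq ihV)
        have h2 := hFlip (x ((m:ℝ)*τ)) (X m)
        rw [hAdef]
        exact sc_lipG _ _ _ _ _ _ _ h1 h2 hFxm hex0 hev0 hL.le hMFpos.le (norm_nonneg _)
      have hdecomp : x (((m+1:ℕ):ℝ)*τ) - X (m+1) =
          (x (((m+1:ℕ):ℝ)*τ) - x ((m:ℝ)*τ) - τ •
            (β • (F (x ((m:ℝ)*τ)) - (2 * ⟪v ((m:ℝ)*τ), F (x ((m:ℝ)*τ))⟫_ℝ) • v ((m:ℝ)*τ))))
          + (x ((m:ℝ)*τ) - X m)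
          + (τ*β) • ((F (x ((m:ℝ)*τ)) - (2 * ⟪v ((m:ℝ)*τ), F (x ((m:ℝ)*τ))⟫_ℝ) • v ((m:ℝ)*τ)) -
              (F (X m) - (2 * ⟪V m, F (X m)⟫_ℝ) • V m)) := by
        rw [hXs]; module
      have hestep : ‖x (((m+1:ℕ):ℝ)*τ) - X (m+1)‖ ≤
          C₀*τ^2 + ‖x ((m:ℝ)*τ) - X m‖ +
            τ*β*(A * (‖x ((m:ℝ)*τ) - X m‖ + ‖v ((m:ℝ)*τ) - V m‖)) := by
        rw [hdecomp]
        calc ‖_ + _ + _‖ ≤ _ + _ + _ := norm_add₃_le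
          _ ≤ C₀*τ^2 + ‖x ((m:ℝ)*τ) - X m‖ +
              τ*β*(A * (‖x ((m:ℝ)*τ) - X m‖ + ‖v ((m:ℝ)*τ) - V m‖)) := by
            refine add_le_add (add_le_add htrX (le_refl _)) ?_
            rw [norm_smul, Real.norm_eq_abs, abs_of_nonneg (mul_pos hτpos hβ).le]
            exact mul_le_mul_of_nonneg_left hgdiff (mul_pos hτpos hβ).le
      -- v step
      have hpq : ‖J (x ((m:ℝ)*τ)) (v ((m:ℝ)*τ)) - J (X m) (V m)‖ ≤
          L * ‖x ((m:ℝ)*τ) - X m‖ + MJ * ‖v ((m:ℝ)*τ) - V m‖ := by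
        have h1 : J (x ((m:ℝ)*τ)) (v ((m:ℝ)*τ)) - J (X m) (V m) =
            (J (x ((m:ℝ)*τ)) - J (X m)) (v ((m:ℝ)*τ)) + (J (X m)) (v ((m:ℝ)*τ) - V m) := by
          simp only [ContinuousLinearMap.sub_apply, map_sub]; abel
        rw [h1]
        calc ‖(J (x ((m:ℝ)*τ)) - J (X m)) (v ((m:ℝ)*τ)) + (J (X m)) (v ((m:ℝ)*τ) - V m)‖
            ≤ ‖(J (x ((m:ℝ)*τ)) - J (X m)) (v ((m:ℝ)*τ))‖ + ‖(J (X m)) (v ((m:ℝ)*τ) - V m)‖ :=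
              norm_add_le _ _
          _ ≤ L * ‖x ((m:ℝ)*τ) - X m‖ + MJ * ‖v ((m:ℝ)*τ) - V m‖ := by
              apply add_le_add
              · calc ‖(J (x ((m:ℝ)*τ)) - J (X m)) (v ((m:ℝ)*τ))‖
                    ≤ ‖J (x ((m:ℝ)*τ)) - J (X m)‖ * ‖v ((m:ℝ)*τ)‖ :=
                      (J (x ((m:ℝ)*τ)) - J (X m)).le_opNorm _
                  _ ≤ L * ‖x ((m:ℝ)*τ) - X m‖ := by
                      rw [hvm, mul_one]; exact hJlip _ _
              · calc ‖(J (X m)) (v ((m:ℝ)*τ) - V m)‖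
                    ≤ ‖J (X m)‖ * ‖v ((m:ℝ)*τ) - V m‖ := (J (X m)).le_opNorm _
                  _ ≤ MJ * ‖v ((m:ℝ)*τ) - V m‖ := mul_le_mul_of_nonneg_right hJXm hev0
      have hpb : ‖J (x ((m:ℝ)*τ)) (v ((m:ℝ)*τ))‖ ≤ MJ := by
        calc ‖J (x ((m:ℝ)*τ)) (v ((m:ℝ)*τ))‖ ≤ ‖J (x ((m:ℝ)*τ))‖ * ‖v ((m:ℝ)*τ)‖ :=
            (J (x ((m:ℝ)*τ))).le_opNorm _
          _ ≤ MJ := by rw [hvm, mul_one]; exact hJxm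
      have hhdiff : ‖(J (x ((m:ℝ)*τ)) (v ((m:ℝ)*τ)) -
            ⟪v ((m:ℝ)*τ), J (x ((m:ℝ)*τ)) (v ((m:ℝ)*τ))⟫_ℝ • v ((m:ℝ)*τ)) -
          (J (X m) (V m) - ⟪V m, J (X m) (V m)⟫_ℝ • V m)‖ ≤
          B * (‖x ((m:ℝ)*τ) - X m‖ + ‖v ((m:ℝ)*τ) - V m‖) := by
        have h1 := aux_lipH (J (x ((m:ℝ)*τ)) (v ((m:ℝ)*τ))) (J (X m) (V m))
          (v ((m:ℝ)*τ)) (V m) (le_of_eq hvm) (le_of_eq ihV)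
        rw [hBdef]
        exact sc_lipH _ _ _ _ _ _ _ h1 hpq hpb hex0 hev0 hL.le hMJpos.le (norm_nonneg _)
      have hvdecomp : v (((m+1:ℕ):ℝ)*τ) - V (m+1) =
          (v (((m+1:ℕ):ℝ)*τ) - v ((m:ℝ)*τ) - τ •
            (γ • (J (x ((m:ℝ)*τ)) (v ((m:ℝ)*τ)) -
              ⟪v ((m:ℝ)*τ), J (x ((m:ℝ)*τ)) (v ((m:ℝ)*τ))⟫_ℝ • v ((m:ℝ)*τ))))
          + (v ((m:ℝ)*τ) - V m)
          + (τ*γ) • ((J (x ((m:ℝ)*τ)) (v ((m:ℝ)*τ)) -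
              ⟪v ((m:ℝ)*τ), J (x ((m:ℝ)*τ)) (v ((m:ℝ)*τ))⟫_ℝ • v ((m:ℝ)*τ)) -
              (J (X m) (V m) - ⟪V m, J (X m) (V m)⟫_ℝ • V m))
          + (Vt (m+1) - V (m+1)) := by
        rw [hVts]; module
      have hfstep : ‖v (((m+1:ℕ):ℝ)*τ) - V (m+1)‖ ≤
          C₀*τ^2 + ‖v ((m:ℝ)*τ) - V m‖ +
            τ*γ*(B * (‖x ((m:ℝ)*τ) - X m‖ + ‖v ((m:ℝ)*τ) - V m‖)) + 2*γ^2*MJ^2*τ^2 := by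
        rw [hvdecomp]
        calc ‖_ + _ + _ + _‖ ≤ ‖_ + _ + _‖ + ‖_‖ := norm_add_le _ _
          _ ≤ (_ + _ + _) + ‖_‖ := add_le_add_left norm_add₃_le _
          _ ≤ C₀*τ^2 + ‖v ((m:ℝ)*τ) - V m‖ +
              τ*γ*(B * (‖x ((m:ℝ)*τ) - X m‖ + ‖v ((m:ℝ)*τ) - V m‖)) + 2*γ^2*MJ^2*τ^2 := by
            refine add_le_add (add_le_add (add_le_add htrV (le_refl _)) ?_) hVerr
            rw [norm_smul, Real.norm_eq_abs, abs_of_nonneg (mul_pos hτpos hγ).le]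
            exact mul_le_mul_of_nonneg_left hhdiff (mul_pos hτpos hγ).le
      refine ⟨hV1, ihX', ?_⟩
      have hone : (1:ℝ) ≤ (1+K*τ)^(m+1) := one_le_pow₀ (by linarith only [mul_pos hKpos hτpos])
      have hstep : ‖x (((m+1:ℕ):ℝ)*τ) - X (m+1)‖ + ‖v (((m+1:ℕ):ℝ)*τ) - V (m+1)‖ ≤
          (1+K*τ)*(‖x ((m:ℝ)*τ) - X m‖ + ‖v ((m:ℝ)*τ) - V m‖) + C*τ^2 := by
        rw [hKdef, hCdef]; linarith only [hestep, hfstep]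
      have hmono : (1+K*τ)*(‖x ((m:ℝ)*τ) - X m‖ + ‖v ((m:ℝ)*τ) - V m‖) ≤
          (1+K*τ)*(C * τ^2 * m * (1 + K*τ)^m) :=
        mul_le_mul_of_nonneg_left ihE (by linarith only [mul_pos hKpos hτpos])
      have hfin : (1+K*τ)*(C * τ^2 * m * (1 + K*τ)^m) + C*τ^2 ≤
          C*τ^2*((m:ℝ)+1)*(1+K*τ)^(m+1) := by
        have he : (1+K*τ)*(C * τ^2 * m * (1 + K*τ)^m) = C*τ^2*(m:ℝ)*(1+K*τ)^(m+1) := by ring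
        rw [he]
        have h2 : C*τ^2*1 ≤ C*τ^2*(1+K*τ)^(m+1) :=
          mul_le_mul_of_nonneg_left hone (mul_nonneg hCpos.le (sq_nonneg τ))
        linarith only [h2]
      have hcast : ((m+1:ℕ):ℝ) = (m:ℝ)+1 := by push_cast; ring
      calc ‖x (((m+1:ℕ):ℝ)*τ) - X (m+1)‖ + ‖v (((m+1:ℕ):ℝ)*τ) - V (m+1)‖
          ≤ (1+K*τ)*(‖x ((m:ℝ)*τ) - X m‖ + ‖v ((m:ℝ)*τ) - V m‖) + C*τ^2 := hstep
        _ ≤ (1+K*τ)*(C * τ^2 * m * (1 + K*τ)^m) + C*τ^2 := add_le_add_left hmono _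
        _ ≤ C*τ^2*((m:ℝ)+1)*(1+K*τ)^(m+1) := hfin
        _ = C*τ^2*((m+1:ℕ):ℝ)*(1+K*τ)^(m+1) := by rw [hcast]
  intro n hn1 hnNT
  obtain ⟨-, -, hE⟩ := main n hnNT
  have hp := hpowexp K hKpos.le n hnNT
  have hnτ := hτle n hnNT
  have hP0 : (0:ℝ) ≤ (1+K*τ)^n := pow_nonneg (by linarith only [mul_pos hKpos hτpos]) n
  calc ‖x ((n:ℝ)*τ) - X n‖ + ‖v ((n:ℝ)*τ) - V n‖ ≤ C*τ^2*n*(1+K*τ)^n := hE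
    _ = (C*τ)*(((n:ℝ)*τ)*(1+K*τ)^n) := by ring
    _ ≤ (C*τ)*(T*Real.exp (K*T)) := by
        apply mul_le_mul_of_nonneg_left _ (mul_nonneg hCpos.le hτpos.le)
        exact mul_le_mul hnτ hp hP0 hT.le
    _ = C*T*Real.exp (K*T)*τ := by ring
end

section
/- Let N ≥ 1 and k ≥ 1, let v_1, …, v_k ∈ ℝ^N be orthonormal, let J be a self-adjoint (symmetric) linear map from ℝ^N to ℝ^N with operator norm ‖J‖ ≤ Ĵ, let τ, γ ≥ 0, and for 1 ≤ i ≤ k set ṽ_i = v_i + τ γ (I - v_i v_iᵀ - 2 ∑_{j=1}^{i-1} v_j v_jᵀ) J v_i. Then for all 1 ≤ m < i ≤ k, |⟪ṽ_m, ṽ_i⟫| ≤ 4 k² γ² Ĵ² τ². -/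
open scoped InnerProductSpace

/-- First estimate of Lemma 4.1 of the paper: near-orthogonality of the un-normalized
direction updates of the explicit Euler scheme for index-k saddle dynamics. -/
theorem cross_inner_bound_euler_kSD (N k : ℕ) (hN : 1 ≤ N) (hk : 1 ≤ k)
    (v : Fin k → EuclideanSpace ℝ (Fin N)) (hON : Orthonormal ℝ v)
    (J : EuclideanSpace ℝ (Fin N) →L[ℝ] EuclideanSpace ℝ (Fin N))
    (hJsym : ∀ a b, ⟪J a, b⟫_ℝ = ⟪a, J b⟫_ℝ)
    (Jhat : ℝ) (hJ : ‖J‖ ≤ Jhat) (τ γ : ℝ) (hτ : 0 ≤ τ) (hγ : 0 ≤ γ)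
    (vt : Fin k → EuclideanSpace ℝ (Fin N))
    (hvt : ∀ i, vt i = v i + (τ * γ) •
      (J (v i) - ⟪v i, J (v i)⟫_ℝ • v i -
        (2:ℝ) • ∑ j ∈ Finset.Iio i, ⟪v j, J (v i)⟫_ℝ • v j)) :
    ∀ m i : Fin k, m < i →
      |⟪vt m, vt i⟫_ℝ| ≤ 4 * (k:ℝ) ^ 2 * γ ^ 2 * Jhat ^ 2 * τ ^ 2 := by
  intro m i hmi
  have hJ0 : (0:ℝ) ≤ Jhat := le_trans (norm_nonneg J) hJ
  have hON' : ∀ a b : Fin k, ⟪v a, v b⟫_ℝ = if a = b then 1 else 0 :=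
    orthonormal_iff_ite.mp hON
  have hnorm1 : ∀ a : Fin k, ‖v a‖ = 1 := hON.1
  set w : Fin k → EuclideanSpace ℝ (Fin N) := fun a =>
    J (v a) - ⟪v a, J (v a)⟫_ℝ • v a -
      (2:ℝ) • ∑ j ∈ Finset.Iio a, ⟪v j, J (v a)⟫_ℝ • v j with hw
  have hvt' : ∀ a, vt a = v a + (τ * γ) • w a := hvt
  have hJv : ∀ a : Fin k, ‖J (v a)‖ ≤ Jhat := fun a => by
    calc ‖J (v a)‖ ≤ ‖J‖ * ‖v a‖ := J.le_opNorm _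
    _ = ‖J‖ := by rw [hnorm1 a, mul_one]
    _ ≤ Jhat := hJ
  have hip : ∀ a b : Fin k, |⟪v a, J (v b)⟫_ℝ| ≤ Jhat := fun a b => by
    calc |⟪v a, J (v b)⟫_ℝ| ≤ ‖v a‖ * ‖J (v b)‖ := abs_real_inner_le_norm _ _
    _ = ‖J (v b)‖ := by rw [hnorm1 a, one_mul]
    _ ≤ Jhat := hJv b
  have hwnorm : ∀ a : Fin k, ‖w a‖ ≤ 2 * k * Jhat := by
    intro a
    have hcard : ((Finset.Iio a).card : ℝ) ≤ (k : ℝ) - 1 := by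
      have h1 : (Finset.Iio a).card = a.val := by simp
      have h2 : a.val + 1 ≤ k := a.isLt
      rw [h1]
      have := Nat.cast_le (α := ℝ) |>.mpr h2
      push_cast at this ⊢
      linarith
    have hsum : ‖∑ j ∈ Finset.Iio a, ⟪v j, J (v a)⟫_ℝ • v j‖ ≤ ((k:ℝ) - 1) * Jhat := by
      calc ‖∑ j ∈ Finset.Iio a, ⟪v j, J (v a)⟫_ℝ • v j‖
          ≤ ∑ j ∈ Finset.Iio a, ‖⟪v j, J (v a)⟫_ℝ • v j‖ := norm_sum_le _ _
        _ ≤ ∑ _j ∈ Finset.Iio a, Jhat := by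
            refine Finset.sum_le_sum fun j _ => ?_
            rw [norm_smul, hnorm1 j, mul_one, Real.norm_eq_abs]
            exact hip j a
        _ = ((Finset.Iio a).card : ℝ) * Jhat := by rw [Finset.sum_const, nsmul_eq_mul]
        _ ≤ ((k:ℝ) - 1) * Jhat := mul_le_mul_of_nonneg_right hcard hJ0
    have h1 : ‖w a‖ ≤ ‖J (v a)‖ + ‖⟪v a, J (v a)⟫_ℝ • v a‖ +
        ‖(2:ℝ) • ∑ j ∈ Finset.Iio a, ⟪v j, J (v a)⟫_ℝ • v j‖ := by
      rw [hw]
      calc ‖J (v a) - ⟪v a, J (v a)⟫_ℝ • v a -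
            (2:ℝ) • ∑ j ∈ Finset.Iio a, ⟪v j, J (v a)⟫_ℝ • v j‖
          ≤ ‖J (v a) - ⟪v a, J (v a)⟫_ℝ • v a‖ +
            ‖(2:ℝ) • ∑ j ∈ Finset.Iio a, ⟪v j, J (v a)⟫_ℝ • v j‖ := norm_sub_le _ _
        _ ≤ _ := by
            gcongr
            exact norm_sub_le _ _
    have h2 : ‖⟪v a, J (v a)⟫_ℝ • v a‖ ≤ Jhat := by
      rw [norm_smul, hnorm1 a, mul_one, Real.norm_eq_abs]
      exact hip a a
    have h3 : ‖(2:ℝ) • ∑ j ∈ Finset.Iio a, ⟪v j, J (v a)⟫_ℝ • v j‖ ≤ 2 * (((k:ℝ) - 1) * Jhat) := by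
      rw [norm_smul, Real.norm_eq_abs]
      have : |(2:ℝ)| = 2 := by norm_num
      rw [this]
      linarith [hsum]
    have := hJv a
    nlinarith [h1, h2, h3, hJ0]
  have hne : m ≠ i := ne_of_lt hmi
  have hmw : ⟪v m, w i⟫_ℝ = -⟪v m, J (v i)⟫_ℝ := by
    have hsum : ∑ j ∈ Finset.Iio i, ⟪v j, J (v i)⟫_ℝ * ⟪v m, v j⟫_ℝ = ⟪v m, J (v i)⟫_ℝ := by
      rw [Finset.sum_eq_single m]
      · rw [hON' m m, if_pos rfl, mul_one]
      · intro j _ hj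
        rw [hON' m j, if_neg (Ne.symm hj), mul_zero]
      · intro h
        exact absurd (Finset.mem_Iio.mpr hmi) h
    rw [hw]
    simp only [inner_sub_right, real_inner_smul_right, inner_sum]
    rw [hsum, hON' m i, if_neg hne]
    ring
  have hwv : ⟪w m, v i⟫_ℝ = ⟪v m, J (v i)⟫_ℝ := by
    have hsum : ∑ j ∈ Finset.Iio m, ⟪v j, J (v m)⟫_ℝ * ⟪v j, v i⟫_ℝ = 0 := by
      refine Finset.sum_eq_zero fun j hj => ?_
      have hji : j ≠ i := ne_of_lt (lt_trans (Finset.mem_Iio.mp hj) hmi)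
      rw [hON' j i, if_neg hji, mul_zero]
    rw [hw]
    simp only [inner_sub_left, real_inner_smul_left, sum_inner]
    rw [hsum, hON' m i, if_neg hne, hJsym]
    ring
  have key : ⟪vt m, vt i⟫_ℝ = (τ * γ) ^ 2 * ⟪w m, w i⟫_ℝ := by
    rw [hvt' m, hvt' i, inner_add_left, inner_add_right, inner_add_right,
      real_inner_smul_left, real_inner_smul_left, real_inner_smul_right,
      real_inner_smul_right, hmw, hwv, hON' m i, if_neg hne]
    ring
  have hbound : |⟪w m, w i⟫_ℝ| ≤ (2 * k * Jhat) * (2 * k * Jhat) := by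
    have hpos : (0:ℝ) ≤ 2 * k * Jhat := by positivity
    calc |⟪w m, w i⟫_ℝ| ≤ ‖w m‖ * ‖w i‖ := abs_real_inner_le_norm _ _
      _ ≤ (2 * k * Jhat) * (2 * k * Jhat) :=
          mul_le_mul (hwnorm m) (hwnorm i) (norm_nonneg _) hpos
  calc |⟪vt m, vt i⟫_ℝ| = (τ * γ) ^ 2 * |⟪w m, w i⟫_ℝ| := by
        rw [key, abs_mul, abs_of_nonneg (sq_nonneg _)]
    _ ≤ (τ * γ) ^ 2 * ((2 * k * Jhat) * (2 * k * Jhat)) :=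
        mul_le_mul_of_nonneg_left hbound (sq_nonneg _)
    _ = 4 * (k:ℝ) ^ 2 * γ ^ 2 * Jhat ^ 2 * τ ^ 2 := by ring
end

section
/- Let N ≥ 1 and k ≥ 1, let v_1, …, v_k ∈ ℝ^N be orthonormal, let J be a linear map from ℝ^N to ℝ^N with operator norm ‖J‖ ≤ Ĵ, let τ, γ ≥ 0, and for 1 ≤ i ≤ k set ṽ_i = v_i + τ γ (I - v_i v_iᵀ - 2 ∑_{j=1}^{i-1} v_j v_jᵀ) J v_i. Then for every 1 ≤ i ≤ k, |‖ṽ_i‖ - 1| ≤ |‖ṽ_i‖² - 1| ≤ (2k - 1)² γ² Ĵ² τ². -/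
open scoped InnerProductSpace

set_option maxHeartbeats 1000000 in
/-- Second estimate of Lemma 4.1 of the paper: the norms of the un-normalized
direction updates of the explicit Euler scheme for index-k saddle dynamics are
quadratically close to 1. -/
theorem norm_near_one_euler_kSD (N k : ℕ) (hN : 1 ≤ N) (hk : 1 ≤ k)
    (v : Fin k → EuclideanSpace ℝ (Fin N)) (hON : Orthonormal ℝ v)
    (J : EuclideanSpace ℝ (Fin N) →L[ℝ] EuclideanSpace ℝ (Fin N))
    (Jhat : ℝ) (hJ : ‖J‖ ≤ Jhat) (τ γ : ℝ) (hτ : 0 ≤ τ) (hγ : 0 ≤ γ)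
    (vt : Fin k → EuclideanSpace ℝ (Fin N))
    (hvt : ∀ i, vt i = v i + (τ * γ) •
      (J (v i) - ⟪v i, J (v i)⟫_ℝ • v i -
        (2:ℝ) • ∑ j ∈ Finset.Iio i, ⟪v j, J (v i)⟫_ℝ • v j)) :
    ∀ i : Fin k,
      |‖vt i‖ - 1| ≤ |‖vt i‖ ^ 2 - 1| ∧
      |‖vt i‖ ^ 2 - 1| ≤ (2 * (k:ℝ) - 1) ^ 2 * γ ^ 2 * Jhat ^ 2 * τ ^ 2 := by
  intro i
  have h1 := hvt i
  set w : EuclideanSpace ℝ (Fin N) :=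
    J (v i) - ⟪v i, J (v i)⟫_ℝ • v i -
      (2:ℝ) • ∑ j ∈ Finset.Iio i, ⟪v j, J (v i)⟫_ℝ • v j with hwdef
  have hvi : ‖v i‖ = 1 := hON.1 i
  have hJ0 : (0:ℝ) ≤ Jhat := le_trans (norm_nonneg J) hJ
  have hk1 : (1:ℝ) ≤ (k:ℝ) := by exact_mod_cast hk
  have hxn : ‖J (v i)‖ ≤ Jhat := by
    calc ‖J (v i)‖ ≤ ‖J‖ * ‖v i‖ := J.le_opNorm _
    _ = ‖J‖ := by rw [hvi, mul_one]
    _ ≤ Jhat := hJ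
  have hite : ∀ a b : Fin k, ⟪v a, v b⟫_ℝ = if a = b then 1 else 0 :=
    orthonormal_iff_ite.mp hON
  -- orthogonality of w to v i
  have hQ0 : ⟪v i, ∑ j ∈ Finset.Iio i, ⟪v j, J (v i)⟫_ℝ • v j⟫_ℝ = 0 := by
    rw [inner_sum]
    refine Finset.sum_eq_zero fun j hj => ?_
    rw [real_inner_smul_right, hite i j, if_neg (Finset.mem_Iio.mp hj).ne', mul_zero]
  have horth : ⟪v i, w⟫_ℝ = 0 := by
    rw [hwdef, inner_sub_right, inner_sub_right, real_inner_smul_right,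
      real_inner_smul_right, hQ0, hite i i, if_pos rfl]
    ring
  -- Pythagoras
  have hnorm : ‖vt i‖ ^ 2 = 1 + (τ * γ) ^ 2 * ‖w‖ ^ 2 := by
    rw [h1, norm_add_sq_real, real_inner_smul_right, horth, norm_smul, hvi]
    simp [Real.norm_eq_abs, sq_abs, mul_pow]
  -- bound on ‖w‖
  have hPsum : (∑ j ∈ Finset.Iic i, ⟪v j, J (v i)⟫_ℝ • v j) =
      ⟪v i, J (v i)⟫_ℝ • v i + ∑ j ∈ Finset.Iio i, ⟪v j, J (v i)⟫_ℝ • v j := by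
    rw [← Finset.Iio_insert, Finset.sum_insert (by simp)]
  have hsplit : w = (J (v i) - ∑ j ∈ Finset.Iic i, ⟪v j, J (v i)⟫_ℝ • v j) -
      ∑ j ∈ Finset.Iio i, ⟪v j, J (v i)⟫_ℝ • v j := by
    rw [hwdef, hPsum, two_smul]; abel
  have hfirst : ‖J (v i) - ∑ j ∈ Finset.Iic i, ⟪v j, J (v i)⟫_ℝ • v j‖ ≤ ‖J (v i)‖ := by
    have hip : ⟪J (v i), ∑ j ∈ Finset.Iic i, ⟪v j, J (v i)⟫_ℝ • v j⟫_ℝ =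
        ∑ j ∈ Finset.Iic i, ⟪v j, J (v i)⟫_ℝ ^ 2 := by
      rw [inner_sum]
      refine Finset.sum_congr rfl fun j _ => ?_
      rw [real_inner_smul_right, real_inner_comm]; ring
    have hPn : ‖(∑ j ∈ Finset.Iic i, ⟪v j, J (v i)⟫_ℝ • v j)‖ ^ 2 =
        ∑ j ∈ Finset.Iic i, ⟪v j, J (v i)⟫_ℝ ^ 2 := by
      rw [← real_inner_self_eq_norm_sq,
        hON.inner_sum (fun j => ⟪v j, J (v i)⟫_ℝ) (fun j => ⟪v j, J (v i)⟫_ℝ) (Finset.Iic i)]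
      simp [sq]
    have hsq : ‖J (v i) - ∑ j ∈ Finset.Iic i, ⟪v j, J (v i)⟫_ℝ • v j‖ ^ 2 =
        ‖J (v i)‖ ^ 2 - ∑ j ∈ Finset.Iic i, ⟪v j, J (v i)⟫_ℝ ^ 2 := by
      rw [norm_sub_sq_real, hip, hPn]; ring
    have hsum0 : (0:ℝ) ≤ ∑ j ∈ Finset.Iic i, ⟪v j, J (v i)⟫_ℝ ^ 2 :=
      Finset.sum_nonneg fun j _ => sq_nonneg _
    nlinarith [norm_nonneg (J (v i) - ∑ j ∈ Finset.Iic i, ⟪v j, J (v i)⟫_ℝ • v j),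
      norm_nonneg (J (v i))]
  have hsecond : ‖(∑ j ∈ Finset.Iio i, ⟪v j, J (v i)⟫_ℝ • v j)‖ ≤ ((k:ℝ) - 1) * Jhat := by
    calc ‖(∑ j ∈ Finset.Iio i, ⟪v j, J (v i)⟫_ℝ • v j)‖
        ≤ ∑ j ∈ Finset.Iio i, ‖(⟪v j, J (v i)⟫_ℝ • v j)‖ := norm_sum_le _ _
      _ ≤ ∑ _j ∈ Finset.Iio i, Jhat := by
          refine Finset.sum_le_sum fun j _ => ?_
          rw [norm_smul, hON.1 j, mul_one, Real.norm_eq_abs]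
          calc |⟪v j, J (v i)⟫_ℝ| ≤ ‖v j‖ * ‖J (v i)‖ := abs_real_inner_le_norm _ _
            _ = ‖J (v i)‖ := by rw [hON.1 j, one_mul]
            _ ≤ Jhat := hxn
      _ = ((Finset.Iio i).card : ℝ) * Jhat := by rw [Finset.sum_const, nsmul_eq_mul]
      _ ≤ ((k:ℝ) - 1) * Jhat := by
          refine mul_le_mul_of_nonneg_right ?_ hJ0
          have hcard : (Finset.Iio i).card = (i : ℕ) := by simp
          rw [hcard]
          have : (i : ℕ) + 1 ≤ k := i.isLt
          have : ((i : ℕ) : ℝ) + 1 ≤ (k : ℝ) := by exact_mod_cast this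
          linarith
  have hwle : ‖w‖ ≤ (k:ℝ) * Jhat := by
    calc ‖w‖ ≤ ‖J (v i) - ∑ j ∈ Finset.Iic i, ⟪v j, J (v i)⟫_ℝ • v j‖ +
        ‖(∑ j ∈ Finset.Iio i, ⟪v j, J (v i)⟫_ℝ • v j)‖ := by
          rw [hsplit]; exact norm_sub_le _ _
      _ ≤ Jhat + ((k:ℝ) - 1) * Jhat := add_le_add (hfirst.trans hxn) hsecond
      _ = (k:ℝ) * Jhat := by ring
  -- conclude
  have hs0 : (0:ℝ) ≤ (τ * γ) ^ 2 * ‖w‖ ^ 2 := by positivity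
  have habs : |‖vt i‖ ^ 2 - 1| = (τ * γ) ^ 2 * ‖w‖ ^ 2 := by
    rw [hnorm]; rw [add_sub_cancel_left]; exact abs_of_nonneg hs0
  have h2 : (1:ℝ) ≤ ‖vt i‖ ^ 2 := by rw [hnorm]; linarith
  have hn1 : 1 ≤ ‖vt i‖ := by
    nlinarith [norm_nonneg (vt i), h2]
  constructor
  · rw [abs_of_nonneg (by linarith : (0:ℝ) ≤ ‖vt i‖ - 1),
      abs_of_nonneg (by linarith : (0:ℝ) ≤ ‖vt i‖ ^ 2 - 1)]
    nlinarith [hn1, h2]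
  · rw [habs]
    have hw2 : ‖w‖ ^ 2 ≤ ((2 * (k:ℝ) - 1) * Jhat) ^ 2 := by
      have h1 : (k:ℝ) * Jhat ≤ (2 * (k:ℝ) - 1) * Jhat := by nlinarith
      nlinarith [norm_nonneg w, mul_nonneg (by linarith : (0:ℝ) ≤ (k:ℝ)) hJ0]
    calc (τ * γ) ^ 2 * ‖w‖ ^ 2 ≤ (τ * γ) ^ 2 * ((2 * (k:ℝ) - 1) * Jhat) ^ 2 :=
        mul_le_mul_of_nonneg_left hw2 (sq_nonneg _)
      _ = (2 * (k:ℝ) - 1) ^ 2 * γ ^ 2 * Jhat ^ 2 * τ ^ 2 := by ring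
end

section
/- Let N ≥ 1, k ≥ 1, τ > 0, and let 0 < M < G be constants. Let ṽ_1, …, ṽ_k ∈ ℝ^N satisfy |⟪ṽ_m, ṽ_i⟫| ≤ M τ² for all m ≠ i and |‖ṽ_i‖² - 1| ≤ M τ² for all i. Define v_1, …, v_k recursively by the normalized Gram–Schmidt procedure: v_i = (ṽ_i - ∑_{j=1}^{i-1} ⟪ṽ_i, v_j⟫ v_j) / ‖ṽ_i - ∑_{j=1}^{i-1} ⟪ṽ_i, v_j⟫ v_j‖, all denominators being assumed nonzero. If 1 - M τ² - τ⁴ (k-1) G² > 0 and (M + τ² (k-1) G²) / √(1 - M τ² - τ⁴ (k-1) G²) ≤ G, then |⟪ṽ_i, v_m⟫| ≤ G τ² for all 1 ≤ m < i ≤ k. -/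
open scoped InnerProductSpace

/-- Estimate (4.12) of the paper: induction bound |⟪ṽ_i, v_m⟫| ≤ Gτ² for the
normalized Gram–Schmidt orthonormalization step of the explicit Euler scheme for
index-k saddle dynamics. -/
theorem gram_schmidt_cross_inner_bound (N k : ℕ) (hN : 1 ≤ N) (hk : 1 ≤ k)
    (τ M G : ℝ) (hτ : 0 < τ) (hM : 0 < M) (hMG : M < G)
    (vt v : Fin k → EuclideanSpace ℝ (Fin N))
    (hcross : ∀ m i : Fin k, m ≠ i → |⟪vt m, vt i⟫_ℝ| ≤ M * τ ^ 2)
    (hnorm : ∀ i : Fin k, |‖vt i‖ ^ 2 - 1| ≤ M * τ ^ 2)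
    (hden : ∀ i : Fin k,
      vt i - ∑ j ∈ Finset.Iio i, ⟪vt i, v j⟫_ℝ • v j ≠ 0)
    (hv : ∀ i : Fin k,
      v i = ‖vt i - ∑ j ∈ Finset.Iio i, ⟪vt i, v j⟫_ℝ • v j‖⁻¹ •
        (vt i - ∑ j ∈ Finset.Iio i, ⟪vt i, v j⟫_ℝ • v j))
    (hpos : 0 < 1 - M * τ ^ 2 - τ ^ 4 * ((k:ℝ) - 1) * G ^ 2)
    (hcond : (M + τ ^ 2 * ((k:ℝ) - 1) * G ^ 2) /
      Real.sqrt (1 - M * τ ^ 2 - τ ^ 4 * ((k:ℝ) - 1) * G ^ 2) ≤ G) :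
    ∀ m i : Fin k, m < i → |⟪vt i, v m⟫_ℝ| ≤ G * τ ^ 2 := by
  have hG : 0 < G := hM.trans hMG
  have hk1 : (1:ℝ) ≤ (k:ℝ) := by exact_mod_cast hk
  have hk1' : 0 ≤ (k:ℝ) - 1 := by linarith
  set s := Real.sqrt (1 - M * τ ^ 2 - τ ^ 4 * ((k:ℝ) - 1) * G ^ 2) with hsdef
  have hspos : 0 < s := Real.sqrt_pos.mpr hpos
  have hs2 : s ^ 2 = 1 - M * τ ^ 2 - τ ^ 4 * ((k:ℝ) - 1) * G ^ 2 := Real.sq_sqrt hpos.le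
  have hX : 0 ≤ M + τ ^ 2 * ((k:ℝ) - 1) * G ^ 2 := by
    have h0 : 0 ≤ τ ^ 2 * ((k:ℝ) - 1) * G ^ 2 :=
      mul_nonneg (mul_nonneg (sq_nonneg τ) hk1') (sq_nonneg G)
    linarith
  have main : ∀ n : ℕ, ∀ m : Fin k, m.val = n →
      ‖v m‖ = 1 ∧ (∀ j : Fin k, j < m → ⟪v j, v m⟫_ℝ = 0) ∧
      (∀ i : Fin k, m < i → |⟪vt i, v m⟫_ℝ| ≤ G * τ ^ 2) := by
    intro n
    induction n using Nat.strong_induction_on with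
    | _ n IH =>
    intro m hm
    have IHj : ∀ j : Fin k, j < m →
        ‖v j‖ = 1 ∧ (∀ l : Fin k, l < j → ⟪v l, v j⟫_ℝ = 0) ∧
        (∀ i : Fin k, j < i → |⟪vt i, v j⟫_ℝ| ≤ G * τ ^ 2) := fun j hj =>
      IH j.val (hm ▸ Fin.lt_def.mp hj) j rfl
    have horth : ∀ j l : Fin k, j < m → l < m →
        ⟪v j, v l⟫_ℝ = if j = l then 1 else 0 := by
      intro j l hj hl
      by_cases hjl : j = l
      · subst hjl
        rw [if_pos rfl, real_inner_self_eq_norm_sq, (IHj j hj).1]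
        norm_num
      · rw [if_neg hjl]
        rcases lt_or_gt_of_ne hjl with h | h
        · exact (IHj l hl).2.1 j h
        · rw [real_inner_comm]; exact (IHj j hj).2.1 l h
    set wm := vt m - ∑ j ∈ Finset.Iio m, ⟪vt m, v j⟫_ℝ • v j with hwm
    have hwm0 : wm ≠ 0 := hden m
    have hvm : v m = ‖wm‖⁻¹ • wm := hv m
    have hnormv : ‖v m‖ = 1 := by
      rw [hvm, norm_smul, norm_inv, norm_norm,
        inv_mul_cancel₀ (norm_ne_zero_iff.mpr hwm0)]
    have hjwm : ∀ j : Fin k, j < m → ⟪v j, wm⟫_ℝ = 0 := by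
      intro j hj
      rw [hwm, inner_sub_right, inner_sum]
      simp only [real_inner_smul_right]
      have hsum : ∑ l ∈ Finset.Iio m, ⟪vt m, v l⟫_ℝ * ⟪v j, v l⟫_ℝ
          = ⟪vt m, v j⟫_ℝ := by
        rw [Finset.sum_eq_single j]
        · rw [horth j j hj hj, if_pos rfl, mul_one]
        · intro l hl hlj
          rw [horth j l hj (Finset.mem_Iio.mp hl), if_neg (fun h => hlj h.symm),
            mul_zero]
        · intro hjmem
          exact absurd (Finset.mem_Iio.mpr hj) hjmem
      rw [hsum, real_inner_comm, sub_self]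
    have horthvm : ∀ j : Fin k, j < m → ⟪v j, v m⟫_ℝ = 0 := by
      intro j hj
      rw [hvm, real_inner_smul_right, hjwm j hj, mul_zero]
    have hip : ⟪vt m, wm⟫_ℝ = ‖vt m‖ ^ 2 - ∑ j ∈ Finset.Iio m, ⟪vt m, v j⟫_ℝ ^ 2 := by
      rw [hwm, inner_sub_right, inner_sum]
      simp only [real_inner_smul_right]
      rw [real_inner_self_eq_norm_sq]
      congr 1
      exact Finset.sum_congr rfl fun j _ => (sq _).symm
    have hnw2 : ‖wm‖ ^ 2 = ⟪vt m, wm⟫_ℝ := by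
      rw [← real_inner_self_eq_norm_sq]
      nth_rewrite 1 [hwm]
      rw [inner_sub_left, sum_inner]
      rw [Finset.sum_eq_zero (fun j hj => by
        rw [real_inner_smul_left, hjwm j (Finset.mem_Iio.mp hj), mul_zero])]
      ring
    have hcard : ((Finset.Iio m).card : ℝ) ≤ (k:ℝ) - 1 := by
      have h1 : (Finset.Iio m).card ≤ k - 1 := by
        have := (Finset.card_le_univ (Finset.Iio m))
        have h2 : m ∉ Finset.Iio m := by simp
        have h3 : (Finset.Iio m).card < Finset.univ.card :=
          Finset.card_lt_card (Finset.ssubset_univ_iff.mpr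
            (fun h => h2 (h ▸ Finset.mem_univ m)))
        simp only [Finset.card_univ, Fintype.card_fin] at h3
        omega
      have : ((Finset.Iio m).card : ℝ) ≤ ((k - 1 : ℕ) : ℝ) := by exact_mod_cast h1
      have h4 : ((k - 1 : ℕ) : ℝ) = (k:ℝ) - 1 := by
        have : 1 ≤ k := hk
        push_cast [this]
        ring
      linarith [h4 ▸ this]
    have hsumsq : ∑ j ∈ Finset.Iio m, ⟪vt m, v j⟫_ℝ ^ 2 ≤ ((k:ℝ) - 1) * (G * τ ^ 2) ^ 2 := by
      calc ∑ j ∈ Finset.Iio m, ⟪vt m, v j⟫_ℝ ^ 2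
          ≤ ∑ _j ∈ Finset.Iio m, (G * τ ^ 2) ^ 2 := by
            apply Finset.sum_le_sum
            intro j hj
            have hj' := Finset.mem_Iio.mp hj
            have hb := (IHj j hj').2.2 m hj'
            have := abs_nonneg (⟪vt m, v j⟫_ℝ)
            nlinarith [sq_abs (⟪vt m, v j⟫_ℝ)]
        _ = ((Finset.Iio m).card : ℝ) * (G * τ ^ 2) ^ 2 := by
            rw [Finset.sum_const, nsmul_eq_mul]
        _ ≤ ((k:ℝ) - 1) * (G * τ ^ 2) ^ 2 := by
            apply mul_le_mul_of_nonneg_right hcard (sq_nonneg _)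
    have hlow : s ^ 2 ≤ ‖wm‖ ^ 2 := by
      have h1 : 1 - M * τ ^ 2 ≤ ‖vt m‖ ^ 2 := by
        have := abs_le.mp (hnorm m)
        linarith [this.1]
      rw [hnw2, hip, hs2]
      nlinarith [hsumsq]
    have hwge : s ≤ ‖wm‖ := by
      nlinarith [norm_nonneg wm, hspos]
    refine ⟨hnormv, horthvm, ?_⟩
    intro i hi
    have hnum : |⟪vt i, wm⟫_ℝ| ≤ τ ^ 2 * (M + τ ^ 2 * ((k:ℝ) - 1) * G ^ 2) := by
      rw [hwm, inner_sub_right, inner_sum]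
      simp only [real_inner_smul_right]
      have habs : |∑ j ∈ Finset.Iio m, ⟪vt m, v j⟫_ℝ * ⟪vt i, v j⟫_ℝ|
          ≤ ((k:ℝ) - 1) * (G * τ ^ 2) ^ 2 := by
        calc |∑ j ∈ Finset.Iio m, ⟪vt m, v j⟫_ℝ * ⟪vt i, v j⟫_ℝ|
            ≤ ∑ j ∈ Finset.Iio m, |⟪vt m, v j⟫_ℝ * ⟪vt i, v j⟫_ℝ| :=
              Finset.abs_sum_le_sum_abs _ _
          _ ≤ ∑ _j ∈ Finset.Iio m, (G * τ ^ 2) ^ 2 := by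
              apply Finset.sum_le_sum
              intro j hj
              have hj' := Finset.mem_Iio.mp hj
              have hb1 := (IHj j hj').2.2 m hj'
              have hb2 := (IHj j hj').2.2 i (hj'.trans hi)
              rw [abs_mul, sq]
              exact mul_le_mul hb1 hb2 (abs_nonneg _)
                (le_trans (abs_nonneg _) hb1)
          _ = ((Finset.Iio m).card : ℝ) * (G * τ ^ 2) ^ 2 := by
              rw [Finset.sum_const, nsmul_eq_mul]
          _ ≤ ((k:ℝ) - 1) * (G * τ ^ 2) ^ 2 :=
              mul_le_mul_of_nonneg_right hcard (sq_nonneg _)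
      have hc := hcross i m hi.ne'
      calc |⟪vt i, vt m⟫_ℝ - ∑ j ∈ Finset.Iio m, ⟪vt m, v j⟫_ℝ * ⟪vt i, v j⟫_ℝ|
          ≤ |⟪vt i, vt m⟫_ℝ| + |∑ j ∈ Finset.Iio m, ⟪vt m, v j⟫_ℝ * ⟪vt i, v j⟫_ℝ| :=
            abs_sub _ _
        _ ≤ M * τ ^ 2 + ((k:ℝ) - 1) * (G * τ ^ 2) ^ 2 := add_le_add hc habs
        _ = τ ^ 2 * (M + τ ^ 2 * ((k:ℝ) - 1) * G ^ 2) := by ring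
    have hinv : ‖wm‖⁻¹ ≤ s⁻¹ := by
      apply inv_anti₀ hspos hwge
    calc |⟪vt i, v m⟫_ℝ| = ‖wm‖⁻¹ * |⟪vt i, wm⟫_ℝ| := by
          rw [hvm, real_inner_smul_right, abs_mul, abs_inv, abs_norm]
      _ ≤ s⁻¹ * (τ ^ 2 * (M + τ ^ 2 * ((k:ℝ) - 1) * G ^ 2)) :=
          mul_le_mul hinv hnum (abs_nonneg _) (inv_nonneg.mpr hspos.le)
      _ = τ ^ 2 * ((M + τ ^ 2 * ((k:ℝ) - 1) * G ^ 2) / s) := by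
          rw [div_eq_mul_inv]; ring
      _ ≤ τ ^ 2 * G := mul_le_mul_of_nonneg_left hcond (sq_nonneg τ)
      _ = G * τ ^ 2 := by ring
  intro m i hmi
  exact (main m.val m rfl).2.2 i hmi
end

section
/- Let N ≥ 1, k ≥ 1, τ > 0, and let 0 < M < G be constants with 1 - M τ² - τ⁴ (k-1) G² > 0 and (M + τ² (k-1) G²) / √(1 - M τ² - τ⁴ (k-1) G²) ≤ G. Let ṽ_1, …, ṽ_k ∈ ℝ^N satisfy |⟪ṽ_m, ṽ_i⟫| ≤ M τ² for all m ≠ i and |‖ṽ_i‖² - 1| ≤ M τ² for all i, and define v_1, …, v_k recursively by the normalized Gram–Schmidt procedure v_i = (ṽ_i - ∑_{j=1}^{i-1} ⟪ṽ_i, v_j⟫ v_j) / Y_i with Y_i = ‖ṽ_i - ∑_{j=1}^{i-1} ⟪ṽ_i, v_j⟫ v_j‖, all Y_i being assumed nonzero. Then for every 1 ≤ i ≤ k, Y_i² = ‖ṽ_i‖² - ∑_{j=1}^{i-1} ⟪ṽ_i, v_j⟫², and √(1 - M τ² - (k-1) G² τ⁴) ≤ Y_i ≤ √(1 + M τ²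 + (k-1) G² τ⁴). -/
open scoped InnerProductSpace

set_option maxHeartbeats 1000000 in
/-- Estimate (4.13) of the paper: identity and two-sided bound for the Gram–Schmidt
normalization factors Y_i in the explicit Euler scheme for index-k saddle dynamics. -/
theorem gram_schmidt_normalization_factor_bound (N k : ℕ) (hN : 1 ≤ N) (hk : 1 ≤ k)
    (τ M G : ℝ) (hτ : 0 < τ) (hM : 0 < M) (hMG : M < G)
    (hpos : 0 < 1 - M * τ ^ 2 - τ ^ 4 * ((k:ℝ) - 1) * G ^ 2)
    (hcond : (M + τ ^ 2 * ((k:ℝ) - 1) * G ^ 2) /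
      Real.sqrt (1 - M * τ ^ 2 - τ ^ 4 * ((k:ℝ) - 1) * G ^ 2) ≤ G)
    (vt v : Fin k → EuclideanSpace ℝ (Fin N))
    (hcross : ∀ m i : Fin k, m ≠ i → |⟪vt m, vt i⟫_ℝ| ≤ M * τ ^ 2)
    (hnorm : ∀ i : Fin k, |‖vt i‖ ^ 2 - 1| ≤ M * τ ^ 2)
    (Y : Fin k → ℝ)
    (hY : ∀ i : Fin k,
      Y i = ‖vt i - ∑ j ∈ Finset.Iio i, ⟪vt i, v j⟫_ℝ • v j‖)
    (hYne : ∀ i : Fin k, Y i ≠ 0)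
    (hv : ∀ i : Fin k,
      v i = (Y i)⁻¹ • (vt i - ∑ j ∈ Finset.Iio i, ⟪vt i, v j⟫_ℝ • v j)) :
    ∀ i : Fin k,
      Y i ^ 2 = ‖vt i‖ ^ 2 - ∑ j ∈ Finset.Iio i, ⟪vt i, v j⟫_ℝ ^ 2 ∧
      Real.sqrt (1 - M * τ ^ 2 - ((k:ℝ) - 1) * G ^ 2 * τ ^ 4) ≤ Y i ∧
      Y i ≤ Real.sqrt (1 + M * τ ^ 2 + ((k:ℝ) - 1) * G ^ 2 * τ ^ 4) := by
  have hG : 0 < G := hM.trans hMG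
  set A : ℝ := 1 - M * τ ^ 2 - ((k:ℝ) - 1) * G ^ 2 * τ ^ 4 with hAdef
  have hArw : 1 - M * τ ^ 2 - τ ^ 4 * ((k:ℝ) - 1) * G ^ 2 = A := by rw [hAdef]; ring
  have hApos : 0 < A := by rw [← hArw]; exact hpos
  have hsA : 0 < Real.sqrt A := Real.sqrt_pos.mpr hApos
  have hk1 : (0:ℝ) ≤ (k:ℝ) - 1 := by
    have : (1:ℝ) ≤ (k:ℝ) := by exact_mod_cast hk
    linarith
  have hkcard : ∀ i : Fin k, ((Finset.Iio i).card : ℝ) ≤ (k:ℝ) - 1 := by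
    intro i
    have h1 : (Finset.Iio i).card = (i : ℕ) := Fin.card_Iio i
    have h2 : (i : ℕ) + 1 ≤ k := i.isLt
    rw [h1]
    have : ((i : ℕ) : ℝ) + 1 ≤ (k:ℝ) := by exact_mod_cast h2
    linarith
  have hGτ : 0 ≤ G * τ ^ 2 := by positivity
  -- Main strong induction
  suffices H : ∀ n : ℕ, ∀ i : Fin k, (i : ℕ) < n →
      (‖v i‖ = 1 ∧ (∀ j : Fin k, j < i → ⟪v i, v j⟫_ℝ = 0) ∧
       (∀ m : Fin k, i < m → |⟪vt m, v i⟫_ℝ| ≤ G * τ ^ 2) ∧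
       (Y i ^ 2 = ‖vt i‖ ^ 2 - ∑ j ∈ Finset.Iio i, ⟪vt i, v j⟫_ℝ ^ 2) ∧
       Real.sqrt A ≤ Y i ∧
       Y i ≤ Real.sqrt (1 + M * τ ^ 2 + ((k:ℝ) - 1) * G ^ 2 * τ ^ 4)) by
    intro i
    obtain ⟨_, _, _, h4, h5, h6⟩ := H ((i:ℕ)+1) i (Nat.lt_succ_self _)
    exact ⟨h4, h5, h6⟩
  intro n
  induction n with
  | zero => intro i hi; omega
  | succ n IH =>
    intro i hi
    have IH' : ∀ j : Fin k, j < i →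
        (‖v j‖ = 1 ∧ (∀ l : Fin k, l < j → ⟪v j, v l⟫_ℝ = 0) ∧
         (∀ m : Fin k, j < m → |⟪vt m, v j⟫_ℝ| ≤ G * τ ^ 2) ∧
         (Y j ^ 2 = ‖vt j‖ ^ 2 - ∑ l ∈ Finset.Iio j, ⟪vt j, v l⟫_ℝ ^ 2) ∧
         Real.sqrt A ≤ Y j ∧
         Y j ≤ Real.sqrt (1 + M * τ ^ 2 + ((k:ℝ) - 1) * G ^ 2 * τ ^ 4)) := by
      intro j hj
      have hj' : (j : ℕ) < (i : ℕ) := hj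
      exact IH j (by omega)
    have hYi := hY i
    have hvi := hv i
    set w : EuclideanSpace ℝ (Fin N) :=
      vt i - ∑ j ∈ Finset.Iio i, ⟪vt i, v j⟫_ℝ • v j with hwdef
    -- orthonormality of earlier vectors
    have hon : ∀ j ∈ Finset.Iio i, ∀ l ∈ Finset.Iio i,
        ⟪v j, v l⟫_ℝ = if j = l then 1 else 0 := by
      intro j hj l hl
      rw [Finset.mem_Iio] at hj hl
      rcases eq_or_ne j l with rfl | hne
      · rw [if_pos rfl, real_inner_self_eq_norm_sq, (IH' j hj).1]; norm_num
      · rw [if_neg hne]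
        rcases hne.lt_or_gt with h | h
        · rw [real_inner_comm]; exact (IH' l hl).2.1 j h
        · exact (IH' j hj).2.1 l h
    -- w is orthogonal to earlier v's
    have hwv : ∀ l ∈ Finset.Iio i, ⟪w, v l⟫_ℝ = 0 := by
      intro l hl
      rw [hwdef, inner_sub_left, sum_inner]
      have : ∀ j ∈ Finset.Iio i,
          ⟪(⟪vt i, v j⟫_ℝ : ℝ) • v j, v l⟫_ℝ = ⟪vt i, v j⟫_ℝ * (if j = l then 1 else 0) := by
        intro j hj
        rw [real_inner_smul_left, hon j hj l hl]
      rw [Finset.sum_congr rfl this]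
      simp only [mul_ite, mul_one, mul_zero]
      rw [Finset.sum_ite_eq' _ l, if_pos hl, sub_self]
    -- inner of vt i with the projection sum
    have hproj : ⟪vt i, ∑ j ∈ Finset.Iio i, ⟪vt i, v j⟫_ℝ • v j⟫_ℝ
        = ∑ j ∈ Finset.Iio i, ⟪vt i, v j⟫_ℝ ^ 2 := by
      rw [inner_sum]
      refine Finset.sum_congr rfl fun j hj => ?_
      rw [real_inner_smul_right]; ring
    -- norm of projection sum
    have hprojnorm : ‖∑ j ∈ Finset.Iio i, ⟪vt i, v j⟫_ℝ • v j‖ ^ 2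
        = ∑ j ∈ Finset.Iio i, ⟪vt i, v j⟫_ℝ ^ 2 := by
      rw [← real_inner_self_eq_norm_sq, sum_inner]
      refine Finset.sum_congr rfl fun j hj => ?_
      rw [real_inner_smul_left, inner_sum]
      have : ∀ l ∈ Finset.Iio i,
          ⟪v j, (⟪vt i, v l⟫_ℝ : ℝ) • v l⟫_ℝ = ⟪vt i, v l⟫_ℝ * (if j = l then 1 else 0) := by
        intro l hl
        rw [real_inner_smul_right, hon j hj l hl]
      rw [Finset.sum_congr rfl this]
      simp only [mul_ite, mul_one, mul_zero, Finset.sum_ite_eq, hj, if_true]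
      ring
    -- the key identity
    have hYsq : Y i ^ 2 = ‖vt i‖ ^ 2 - ∑ j ∈ Finset.Iio i, ⟪vt i, v j⟫_ℝ ^ 2 := by
      rw [hYi, hwdef, @norm_sub_sq_real, hproj, hprojnorm]
      ring
    -- positivity of Y i
    have hYnn : 0 ≤ Y i := by rw [hYi]; exact norm_nonneg _
    have hYpos : 0 < Y i := hYnn.lt_of_ne' (hYne i)
    -- bounds on the inner products with earlier v's
    have hcj : ∀ j ∈ Finset.Iio i, |⟪vt i, v j⟫_ℝ| ≤ G * τ ^ 2 := by
      intro j hj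
      rw [Finset.mem_Iio] at hj
      exact (IH' j hj).2.2.1 i hj
    have hsumc_le : ∑ j ∈ Finset.Iio i, ⟪vt i, v j⟫_ℝ ^ 2 ≤ ((k:ℝ) - 1) * G ^ 2 * τ ^ 4 := by
      have h1 : ∑ j ∈ Finset.Iio i, ⟪vt i, v j⟫_ℝ ^ 2
          ≤ ∑ _j ∈ Finset.Iio i, (G * τ ^ 2) ^ 2 := by
        refine Finset.sum_le_sum fun j hj => ?_
        have h := abs_le.mp (hcj j hj)
        exact sq_le_sq' h.1 h.2
      calc ∑ j ∈ Finset.Iio i, ⟪vt i, v j⟫_ℝ ^ 2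
          ≤ ∑ _j ∈ Finset.Iio i, (G * τ ^ 2) ^ 2 := h1
        _ = ((Finset.Iio i).card : ℝ) * (G * τ ^ 2) ^ 2 := by
            rw [Finset.sum_const, nsmul_eq_mul]
        _ ≤ ((k:ℝ) - 1) * (G * τ ^ 2) ^ 2 :=
            mul_le_mul_of_nonneg_right (hkcard i) (sq_nonneg _)
        _ = ((k:ℝ) - 1) * G ^ 2 * τ ^ 4 := by ring
    have hsumc_nn : 0 ≤ ∑ j ∈ Finset.Iio i, ⟪vt i, v j⟫_ℝ ^ 2 :=
      Finset.sum_nonneg fun j _ => sq_nonneg _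
    have hni := abs_le.mp (hnorm i)
    -- lower bound
    have hlow : Real.sqrt A ≤ Y i := by
      have hA_le : A ≤ Y i ^ 2 := by rw [hYsq, hAdef]; linarith [hni.1]
      calc Real.sqrt A ≤ Real.sqrt (Y i ^ 2) := Real.sqrt_le_sqrt hA_le
        _ = Y i := Real.sqrt_sq hYnn
    -- upper bound
    have hup : Y i ≤ Real.sqrt (1 + M * τ ^ 2 + ((k:ℝ) - 1) * G ^ 2 * τ ^ 4) := by
      have h1 : Y i ^ 2 ≤ 1 + M * τ ^ 2 + ((k:ℝ) - 1) * G ^ 2 * τ ^ 4 := by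
        have hnn2 : 0 ≤ ((k:ℝ) - 1) * G ^ 2 * τ ^ 4 :=
          mul_nonneg (mul_nonneg hk1 (sq_nonneg G)) (by positivity)
        rw [hYsq]
        linarith [hni.2]
      calc Y i = Real.sqrt (Y i ^ 2) := (Real.sqrt_sq hYnn).symm
        _ ≤ _ := Real.sqrt_le_sqrt h1
    -- norm of v i
    have hvnorm : ‖v i‖ = 1 := by
      rw [hvi, norm_smul, Real.norm_eq_abs, abs_inv, abs_of_pos hYpos, ← hYi,
        inv_mul_cancel₀ (hYne i)]
    -- orthogonality of v i to earlier v's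
    have hvorth : ∀ j : Fin k, j < i → ⟪v i, v j⟫_ℝ = 0 := by
      intro j hj
      rw [hvi, real_inner_smul_left, hwv j (Finset.mem_Iio.mpr hj), mul_zero]
    -- cross bound
    have hcrossnew : ∀ m : Fin k, i < m → |⟪vt m, v i⟫_ℝ| ≤ G * τ ^ 2 := by
      intro m hm
      have hZ : |⟪vt m, w⟫_ℝ| ≤ M * τ ^ 2 + ((k:ℝ) - 1) * G ^ 2 * τ ^ 4 := by
        rw [hwdef, inner_sub_right, inner_sum]
        have hterm : ∀ j ∈ Finset.Iio i,
            |⟪vt m, (⟪vt i, v j⟫_ℝ : ℝ) • v j⟫_ℝ| ≤ (G * τ ^ 2) ^ 2 := by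
          intro j hj
          rw [Finset.mem_Iio] at hj
          rw [real_inner_smul_right, abs_mul]
          have h1 := hcj j (Finset.mem_Iio.mpr hj)
          have h2 := (IH' j hj).2.2.1 m (hj.trans hm)
          calc |⟪vt i, v j⟫_ℝ| * |⟪vt m, v j⟫_ℝ| ≤ (G * τ ^ 2) * (G * τ ^ 2) :=
              mul_le_mul h1 h2 (abs_nonneg _) hGτ
            _ = (G * τ ^ 2) ^ 2 := by ring
        have hsum : |∑ j ∈ Finset.Iio i, ⟪vt m, (⟪vt i, v j⟫_ℝ : ℝ) • v j⟫_ℝ|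
            ≤ ((k:ℝ) - 1) * G ^ 2 * τ ^ 4 := by
          calc |∑ j ∈ Finset.Iio i, ⟪vt m, (⟪vt i, v j⟫_ℝ : ℝ) • v j⟫_ℝ|
              ≤ ∑ j ∈ Finset.Iio i, |⟪vt m, (⟪vt i, v j⟫_ℝ : ℝ) • v j⟫_ℝ| :=
                Finset.abs_sum_le_sum_abs _ _
            _ ≤ ∑ _j ∈ Finset.Iio i, (G * τ ^ 2) ^ 2 := Finset.sum_le_sum hterm
            _ = ((Finset.Iio i).card : ℝ) * (G * τ ^ 2) ^ 2 := by
                rw [Finset.sum_const, nsmul_eq_mul]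
            _ ≤ ((k:ℝ) - 1) * (G * τ ^ 2) ^ 2 :=
                mul_le_mul_of_nonneg_right (hkcard i) (sq_nonneg _)
            _ = ((k:ℝ) - 1) * G ^ 2 * τ ^ 4 := by ring
        have hmi : |⟪vt m, vt i⟫_ℝ| ≤ M * τ ^ 2 := hcross m i (Fin.ne_of_gt hm)
        calc |⟪vt m, vt i⟫_ℝ - ∑ j ∈ Finset.Iio i, ⟪vt m, (⟪vt i, v j⟫_ℝ : ℝ) • v j⟫_ℝ|
            ≤ |⟪vt m, vt i⟫_ℝ| + |∑ j ∈ Finset.Iio i, ⟪vt m, (⟪vt i, v j⟫_ℝ : ℝ) • v j⟫_ℝ| :=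
              abs_sub _ _
          _ ≤ M * τ ^ 2 + ((k:ℝ) - 1) * G ^ 2 * τ ^ 4 := add_le_add hmi hsum
      have hval : |⟪vt m, v i⟫_ℝ| = |⟪vt m, w⟫_ℝ| / Y i := by
        rw [hvi, real_inner_smul_right, abs_mul, abs_inv, abs_of_pos hYpos,
          div_eq_inv_mul]
      rw [hval]
      have hstep1 : |⟪vt m, w⟫_ℝ| / Y i
          ≤ (M * τ ^ 2 + ((k:ℝ) - 1) * G ^ 2 * τ ^ 4) / Real.sqrt A :=
        div_le_div₀ (by positivity) hZ hsA hlow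
      have hstep2 : (M * τ ^ 2 + ((k:ℝ) - 1) * G ^ 2 * τ ^ 4) / Real.sqrt A ≤ G * τ ^ 2 := by
        rw [div_le_iff₀ hsA]
        rw [hArw] at hcond
        have h2 : M + τ ^ 2 * ((k:ℝ) - 1) * G ^ 2 ≤ G * Real.sqrt A :=
          (div_le_iff₀ hsA).mp hcond
        nlinarith [mul_le_mul_of_nonneg_left h2 (sq_nonneg τ)]
      linarith
    exact ⟨hvnorm, hvorth, hcrossnew, hYsq, hlow, hup⟩
end

section
/- Let k ≥ 1, γ > 0 and Ĵ > 0. There exist τ₀ > 0 and Q > 0, depending only on k, γ and Ĵ, such that the following holds for every 0 < τ ≤ τ₀ and every N ≥ 1: if v_1, …, v_k ∈ ℝ^N are orthonormal, J is a self-adjoint (symmetric) linear map from ℝ^N to ℝ^N with operator norm ‖J‖ ≤ Ĵ, ṽ_i = v_i + τ γ (I - v_i v_iᵀ - 2 ∑_{j=1}^{i-1} v_j v_jᵀ) J v_i for 1 ≤ i ≤ k, and v_1⁺, …, v_k⁺ are obtained from ṽ_1, …, ṽ_k by the normalized Gram–Schmidt procedure v_i⁺ = (ṽ_i - ∑_{j=1}^{i-1}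 ⟪ṽ_i, v_j⁺⟫ v_j⁺)/‖ṽ_i - ∑_{j=1}^{i-1} ⟪ṽ_i, v_j⁺⟫ v_j⁺‖ (with nonzero denominators), then ‖v_i⁺ - ṽ_i‖ ≤ Q τ² for all 1 ≤ i ≤ k. -/
open scoped InnerProductSpace

set_option maxHeartbeats 1000000

/-- Lemma 4.2 of the paper: the normalized Gram–Schmidt orthonormalization step of
the explicit Euler scheme for index-k saddle dynamics changes each un-normalized
direction update by at most Qτ², for τ sufficiently small. -/
theorem gram_schmidt_error_euler_kSD (k : ℕ) (hk : 1 ≤ k)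
    (γ Jhat : ℝ) (hγ : 0 < γ) (hJhat : 0 < Jhat) :
    ∃ τ₀ : ℝ, 0 < τ₀ ∧ ∃ Q : ℝ, 0 < Q ∧
      ∀ τ : ℝ, 0 < τ → τ ≤ τ₀ →
        ∀ N : ℕ, 1 ≤ N →
          ∀ (v : Fin k → EuclideanSpace ℝ (Fin N)), Orthonormal ℝ v →
            ∀ (J : EuclideanSpace ℝ (Fin N) →L[ℝ] EuclideanSpace ℝ (Fin N)),
              (∀ a b, ⟪J a, b⟫_ℝ = ⟪a, J b⟫_ℝ) → ‖J‖ ≤ Jhat →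
              ∀ (vt vp : Fin k → EuclideanSpace ℝ (Fin N)),
                (∀ i, vt i = v i + (τ * γ) •
                  (J (v i) - ⟪v i, J (v i)⟫_ℝ • v i -
                    (2:ℝ) • ∑ j ∈ Finset.Iio i, ⟪v j, J (v i)⟫_ℝ • v j)) →
                (∀ i : Fin k,
                  vt i - ∑ j ∈ Finset.Iio i, ⟪vt i, vp j⟫_ℝ • vp j ≠ 0) →
                (∀ i : Fin k,
                  vp i = ‖vt i - ∑ j ∈ Finset.Iio i, ⟪vt i, vp j⟫_ℝ • vp j‖⁻¹ •
                    (vt i - ∑ j ∈ Finset.Iio i, ⟪vt i, vp j⟫_ℝ • vp j)) →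
                ∀ i : Fin k, ‖vp i - vt i‖ ≤ Q * τ ^ 2 := by
  classical
  have hk' : (1:ℝ) ≤ (k:ℝ) := by exact_mod_cast hk
  set B : ℝ := (2*k+2)*Jhat with hBdef
  have hBpos : 0 < B := by positivity
  set C : ℝ := γ^2 * B^2 with hCdef
  have hCpos : 0 < C := by positivity
  set R : ℝ := 7*k with hRdef
  have hR1 : (1:ℝ) ≤ R := by nlinarith
  have hRpos : (0:ℝ) < R := by linarith
  refine ⟨min 1 C⁻¹, lt_min one_pos (inv_pos.mpr hCpos), C * R^k,
    mul_pos hCpos (pow_pos hRpos k), ?_⟩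
  intro τ hτ hττ₀ N hN v hv J hJsym hJnorm vt vp hvt hne hvp
  have hτ1 : τ ≤ 1 := le_trans hττ₀ (min_le_left _ _)
  have hτC : C * τ^2 ≤ 1 := by
    have h2 : τ ≤ C⁻¹ := le_trans hττ₀ (min_le_right _ _)
    have h3 : C * τ ≤ 1 := by
      rw [← mul_inv_cancel₀ (ne_of_gt hCpos)]
      exact mul_le_mul_of_nonneg_left h2 hCpos.le
    nlinarith
  set a : Fin k → EuclideanSpace ℝ (Fin N) := fun i =>
    J (v i) - ⟪v i, J (v i)⟫_ℝ • v i -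
      (2:ℝ) • ∑ j ∈ Finset.Iio i, ⟪v j, J (v i)⟫_ℝ • v j with hadef
  have hvt' : ∀ i, vt i = v i + (τ * γ) • a i := hvt
  have hvnorm : ∀ i, ‖v i‖ = 1 := fun i => hv.1 i
  have hJv : ∀ i, ‖J (v i)‖ ≤ Jhat := by
    intro i
    calc ‖J (v i)‖ ≤ ‖J‖ * ‖v i‖ := J.le_opNorm _
    _ ≤ Jhat := by rw [hvnorm i, mul_one]; exact hJnorm
  have hip : ∀ i j : Fin k, |⟪v j, J (v i)⟫_ℝ| ≤ Jhat := by
    intro i j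
    calc |⟪v j, J (v i)⟫_ℝ| ≤ ‖v j‖ * ‖J (v i)‖ := abs_real_inner_le_norm _ _
    _ ≤ 1 * Jhat := by rw [hvnorm j]; exact mul_le_mul_of_nonneg_left (hJv i) zero_le_one
    _ = Jhat := one_mul _
  have hcard : ∀ i : Fin k, ((Finset.Iio i).card : ℝ) ≤ (k:ℝ) := by
    intro i
    have : (Finset.Iio i).card ≤ k := by
      calc (Finset.Iio i).card ≤ (Finset.univ : Finset (Fin k)).card :=
        Finset.card_le_card (Finset.subset_univ _)
      _ = k := by simp
    exact_mod_cast this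
  have ha : ∀ i, ‖a i‖ ≤ B := by
    intro i
    have hsum : ‖∑ j ∈ Finset.Iio i, ⟪v j, J (v i)⟫_ℝ • v j‖ ≤ (k:ℝ) * Jhat := by
      calc ‖∑ j ∈ Finset.Iio i, ⟪v j, J (v i)⟫_ℝ • v j‖
          ≤ ∑ j ∈ Finset.Iio i, ‖⟪v j, J (v i)⟫_ℝ • v j‖ := norm_sum_le _ _
      _ ≤ ∑ j ∈ Finset.Iio i, Jhat := by
          refine Finset.sum_le_sum fun j _ => ?_
          rw [norm_smul, hvnorm j, mul_one, Real.norm_eq_abs]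
          exact hip i j
      _ = (Finset.Iio i).card * Jhat := by rw [Finset.sum_const, nsmul_eq_mul]
      _ ≤ (k:ℝ) * Jhat := mul_le_mul_of_nonneg_right (hcard i) hJhat.le
    have h2s : ‖(2:ℝ) • ∑ j ∈ Finset.Iio i, ⟪v j, J (v i)⟫_ℝ • v j‖ =
        2 * ‖∑ j ∈ Finset.Iio i, ⟪v j, J (v i)⟫_ℝ • v j‖ := by
      rw [norm_smul, Real.norm_eq_abs, abs_of_nonneg (by norm_num : (0:ℝ) ≤ 2)]
    have hsv : ‖⟪v i, J (v i)⟫_ℝ • v i‖ ≤ Jhat := by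
      rw [norm_smul, hvnorm i, mul_one, Real.norm_eq_abs]; exact hip i i
    calc ‖a i‖ ≤ ‖J (v i) - ⟪v i, J (v i)⟫_ℝ • v i‖ +
        ‖(2:ℝ) • ∑ j ∈ Finset.Iio i, ⟪v j, J (v i)⟫_ℝ • v j‖ := norm_sub_le _ _
    _ ≤ (‖J (v i)‖ + ‖⟪v i, J (v i)⟫_ℝ • v i‖) +
        2 * ‖∑ j ∈ Finset.Iio i, ⟪v j, J (v i)⟫_ℝ • v j‖ := by
        rw [h2s]; exact add_le_add (norm_sub_le _ _) le_rfl
    _ ≤ (Jhat + Jhat) + 2*((k:ℝ)*Jhat) := by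
        refine add_le_add (add_le_add (hJv i) hsv) ?_
        nlinarith
    _ = B := by rw [hBdef]; ring
  have hsum0 : ∀ (i : Fin k) (s : Finset (Fin k)) (c : Fin k → ℝ), i ∉ s →
      ⟪v i, ∑ j ∈ s, c j • v j⟫_ℝ = 0 := by
    intro i s c his
    rw [inner_sum]
    refine Finset.sum_eq_zero fun j hj => ?_
    have hij : i ≠ j := by rintro rfl; exact his hj
    rw [real_inner_smul_right, hv.2 hij, mul_zero]
  have hva : ∀ i, ⟪v i, a i⟫_ℝ = 0 := by
    intro i
    simp only [hadef]
    simp only [inner_sub_right, real_inner_smul_right]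
    rw [real_inner_self_eq_norm_sq, hvnorm i, hsum0 i _ _ (by simp)]
    ring
  have hcross_a : ∀ i j : Fin k, j < i → ⟪v i, a j⟫_ℝ + ⟪a i, v j⟫_ℝ = 0 := by
    intro i j hji
    have hij : i ≠ j := ne_of_gt hji
    have h1 : ⟪v i, a j⟫_ℝ = ⟪v i, J (v j)⟫_ℝ := by
      simp only [hadef]
      simp only [inner_sub_right, real_inner_smul_right]
      rw [hv.2 hij, hsum0 i _ _ (by simpa [Finset.mem_Iio] using asymm hji)]
      ring
    have h2 : ⟪a i, v j⟫_ℝ = -⟪v i, J (v j)⟫_ℝ := by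
      simp only [hadef]
      simp only [inner_sub_left, real_inner_smul_left]
      have hs : ⟪∑ l ∈ Finset.Iio i, ⟪v l, J (v i)⟫_ℝ • v l, v j⟫_ℝ
          = ⟪v j, J (v i)⟫_ℝ := by
        rw [sum_inner, Finset.sum_eq_single j]
        · rw [real_inner_smul_left, real_inner_self_eq_norm_sq, hvnorm j]; ring
        · intro l _ hlj
          rw [real_inner_smul_left, hv.2 hlj, mul_zero]
        · intro h
          exact absurd (Finset.mem_Iio.mpr hji) h
      rw [hs]
      have hsymm1 : ⟪J (v i), v j⟫_ℝ = ⟪v i, J (v j)⟫_ℝ := hJsym _ _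
      have hsymm2 : ⟪v j, J (v i)⟫_ℝ = ⟪v i, J (v j)⟫_ℝ := by
        rw [real_inner_comm, hsymm1]
      rw [hsymm1, hsymm2, hv.2 hij]
      ring
    rw [h1, h2]; ring
  have hnt : ∀ i, ‖vt i‖^2 = 1 + (τ*γ)^2 * ‖a i‖^2 := by
    intro i
    rw [hvt' i, norm_add_sq_real, real_inner_smul_right, hva, norm_smul,
      Real.norm_eq_abs, hvnorm i, mul_pow, sq_abs]
    ring
  have hnt1 : ∀ i, 1 ≤ ‖vt i‖ := by
    intro i
    nlinarith [hnt i, norm_nonneg (vt i),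
      mul_nonneg (sq_nonneg (τ*γ)) (sq_nonneg ‖a i‖)]
  have hntC : ∀ i, ‖vt i‖ - 1 ≤ C * τ^2 := by
    intro i
    have h1 : ‖vt i‖^2 - 1 ≤ C * τ^2 := by
      have h6 : ‖a i‖^2 ≤ B^2 := by nlinarith [ha i, norm_nonneg (a i)]
      have h7 : (τ*γ)^2 * ‖a i‖^2 ≤ (τ*γ)^2 * B^2 :=
        mul_le_mul_of_nonneg_left h6 (sq_nonneg _)
      rw [hnt i, hCdef]
      nlinarith [h7]
    have h8 : ‖vt i‖ - 1 ≤ ‖vt i‖^2 - 1 := by nlinarith [hnt1 i]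
    linarith
  have hnt2 : ∀ i, ‖vt i‖ ≤ 2 := by
    intro i
    linarith [hntC i, hτC]
  have hcross : ∀ i j : Fin k, j < i → |⟪vt i, vt j⟫_ℝ| ≤ C * τ^2 := by
    intro i j hji
    have hij : i ≠ j := ne_of_gt hji
    have hexp : ⟪vt i, vt j⟫_ℝ = (τ*γ)^2 * ⟪a i, a j⟫_ℝ := by
      rw [hvt' i, hvt' j]
      simp only [inner_add_left, inner_add_right, real_inner_smul_left,
        real_inner_smul_right]
      have h0 := hv.2 hij
      have hc := hcross_a i j hji
      linear_combination h0 + (τ*γ) * hc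
    rw [hexp, abs_mul, abs_pow, sq_abs]
    have hBB : |⟪a i, a j⟫_ℝ| ≤ B * B := by
      calc |⟪a i, a j⟫_ℝ| ≤ ‖a i‖ * ‖a j‖ := abs_real_inner_le_norm _ _
      _ ≤ B * B := mul_le_mul (ha i) (ha j) (norm_nonneg _) hBpos.le
    calc (τ*γ)^2 * |⟪a i, a j⟫_ℝ| ≤ (τ*γ)^2 * (B*B) :=
      mul_le_mul_of_nonneg_left hBB (sq_nonneg _)
    _ = C * τ^2 := by rw [hCdef]; ring
  have hvpnorm : ∀ j, ‖vp j‖ = 1 := by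
    intro j
    rw [hvp j, norm_smul, norm_inv, norm_norm]
    exact inv_mul_cancel₀ (norm_ne_zero_iff.mpr (hne j))
  have main : ∀ n : ℕ, ∀ i : Fin k, (i : ℕ) < n →
      ‖vp i - vt i‖ ≤ C * R^((i:ℕ)+1) * τ^2 := by
    intro n
    induction n with
    | zero => intro i h; omega
    | succ n ih =>
      intro i hi
      by_cases hin : (i:ℕ) < n
      · exact ih i hin
      have hin' : (i:ℕ) = n := by omega
      set u := vt i - ∑ j ∈ Finset.Iio i, ⟪vt i, vp j⟫_ℝ • vp j with hu
      have hRpow1 : (1:ℝ) ≤ R^(i:ℕ) := one_le_pow₀ hR1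
      have hCτ : (0:ℝ) ≤ C * τ^2 := mul_nonneg hCpos.le (sq_nonneg τ)
      have hcoef : ∀ j ∈ Finset.Iio i, |⟪vt i, vp j⟫_ℝ| ≤ 3*C*R^(i:ℕ)*τ^2 := by
        intro j hj
        have hji : j < i := Finset.mem_Iio.mp hj
        have hjlt : (j:ℕ) < (i:ℕ) := hji
        have h2 : ‖vp j - vt j‖ ≤ C*R^((j:ℕ)+1)*τ^2 := ih j (by omega)
        have h2' : ‖vp j - vt j‖ ≤ C*R^(i:ℕ)*τ^2 := by
          refine le_trans h2 ?_
          have hRR : R^((j:ℕ)+1) ≤ R^(i:ℕ) := pow_le_pow_right₀ hR1 (by omega)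
          nlinarith [sq_nonneg τ]
        have h3 : ⟪vt i, vp j⟫_ℝ = ⟪vt i, vt j⟫_ℝ + ⟪vt i, vp j - vt j⟫_ℝ := by
          rw [← inner_add_right]; congr 1; abel
        have h4 : |⟪vt i, vp j - vt j⟫_ℝ| ≤ 2 * (C*R^(i:ℕ)*τ^2) := by
          calc |⟪vt i, vp j - vt j⟫_ℝ| ≤ ‖vt i‖ * ‖vp j - vt j‖ :=
            abs_real_inner_le_norm _ _
          _ ≤ 2 * (C*R^(i:ℕ)*τ^2) :=
            mul_le_mul (hnt2 i) h2' (norm_nonneg _) (by norm_num)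
        rw [h3]
        calc |⟪vt i, vt j⟫_ℝ + ⟪vt i, vp j - vt j⟫_ℝ|
            ≤ |⟪vt i, vt j⟫_ℝ| + |⟪vt i, vp j - vt j⟫_ℝ| := abs_add_le _ _
        _ ≤ C*τ^2 + 2 * (C*R^(i:ℕ)*τ^2) := add_le_add (hcross i j hji) h4
        _ ≤ 3*C*R^(i:ℕ)*τ^2 := by
            nlinarith [mul_nonneg hCτ (sub_nonneg.mpr hRpow1)]
      have huvt : ‖u - vt i‖ ≤ 3*(k:ℝ)*C*R^(i:ℕ)*τ^2 := by
        have hdiff : u - vt i = -∑ j ∈ Finset.Iio i, ⟪vt i, vp j⟫_ℝ • vp j := by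
          rw [hu]; abel
        rw [hdiff, norm_neg]
        calc ‖∑ j ∈ Finset.Iio i, ⟪vt i, vp j⟫_ℝ • vp j‖
            ≤ ∑ j ∈ Finset.Iio i, ‖⟪vt i, vp j⟫_ℝ • vp j‖ := norm_sum_le _ _
        _ ≤ ∑ j ∈ Finset.Iio i, 3*C*R^(i:ℕ)*τ^2 := by
            refine Finset.sum_le_sum fun j hj => ?_
            rw [norm_smul, hvpnorm j, mul_one, Real.norm_eq_abs]
            exact hcoef j hj
        _ = (Finset.Iio i).card * (3*C*R^(i:ℕ)*τ^2) := by
            rw [Finset.sum_const, nsmul_eq_mul]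
        _ ≤ (k:ℝ) * (3*C*R^(i:ℕ)*τ^2) := by
            refine mul_le_mul_of_nonneg_right (hcard i) ?_
            positivity
        _ = 3*(k:ℝ)*C*R^(i:ℕ)*τ^2 := by ring
      have hkR : (1:ℝ) ≤ (k:ℝ) * R^(i:ℕ) := by
        have := mul_le_mul hk' hRpow1 zero_le_one (le_trans zero_le_one hk')
        simpa using this
      have hun : |‖u‖ - 1| ≤ 4*(k:ℝ)*C*R^(i:ℕ)*τ^2 := by
        have h1 : |‖u‖ - ‖vt i‖| ≤ ‖u - vt i‖ := abs_norm_sub_norm_le _ _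
        have h2 : |‖vt i‖ - 1| ≤ C*τ^2 := by
          rw [abs_of_nonneg (by linarith [hnt1 i])]
          exact hntC i
        calc |‖u‖ - 1| = |(‖u‖ - ‖vt i‖) + (‖vt i‖ - 1)| := by congr 1; ring
        _ ≤ |‖u‖ - ‖vt i‖| + |‖vt i‖ - 1| := abs_add_le _ _
        _ ≤ 3*(k:ℝ)*C*R^(i:ℕ)*τ^2 + C*τ^2 := add_le_add (le_trans h1 huvt) h2
        _ ≤ 4*(k:ℝ)*C*R^(i:ℕ)*τ^2 := by
            nlinarith [mul_nonneg hCτ (sub_nonneg.mpr hkR)]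
      have hunz : ‖u‖ ≠ 0 := norm_ne_zero_iff.mpr (hne i)
      have hvpu : ‖vp i - u‖ = |1 - ‖u‖| := by
        have hvpi : vp i = ‖u‖⁻¹ • u := hvp i
        rw [hvpi]
        have hsm : ‖u‖⁻¹ • u - u = (‖u‖⁻¹ - 1) • u := by rw [sub_smul, one_smul]
        rw [hsm, norm_smul, Real.norm_eq_abs]
        calc |‖u‖⁻¹ - 1| * ‖u‖ = |‖u‖⁻¹ - 1| * |‖u‖| := by rw [abs_norm]
        _ = |(‖u‖⁻¹ - 1) * ‖u‖| := (abs_mul _ _).symm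
        _ = |1 - ‖u‖| := by
            congr 1
            rw [sub_mul, inv_mul_cancel₀ hunz, one_mul]
      have hsplit : ‖vp i - vt i‖ ≤ ‖vp i - u‖ + ‖u - vt i‖ := by
        have h : vp i - vt i = (vp i - u) + (u - vt i) := by abel
        rw [h]; exact norm_add_le _ _
      calc ‖vp i - vt i‖ ≤ ‖vp i - u‖ + ‖u - vt i‖ := hsplit
      _ ≤ 4*(k:ℝ)*C*R^(i:ℕ)*τ^2 + 3*(k:ℝ)*C*R^(i:ℕ)*τ^2 := by
          refine add_le_add ?_ huvt
          rw [hvpu, abs_sub_comm]; exact hun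
      _ = 7*(k:ℝ)*C*R^(i:ℕ)*τ^2 := by ring
      _ = C * R^((i:ℕ)+1) * τ^2 := by rw [hRdef, pow_succ]; ring
  intro i
  refine le_trans (main k i i.isLt) ?_
  have hpow : R^((i:ℕ)+1) ≤ R^k := pow_le_pow_right₀ hR1 (by omega)
  nlinarith [sq_nonneg τ, mul_nonneg hCpos.le (sq_nonneg τ)]
end

section
/- Let N ≥ 1, k ≥ 1, T > 0, β > 0, L > 0, and let F : ℝ^N → ℝ^N satisfy ‖F(y)‖ ≤ L(1 + ‖y‖) for all y. Fix x_0 ∈ ℝ^N. Then there exists a constant C > 0, depending only on ‖x_0‖, k, β, L and T, such that for every positive integer N_T, setting τ = T/N_T, and for all sequences (x_n)_{n=0}^{N_T} and (v_{j,n})_{n=0}^{N_T} (1 ≤ j ≤ k) in ℝ^N with ‖v_{j,n}‖ = 1 for all j, n and x_n = x_{n-1} + τ β (I - 2 ∑_{j=1}^k v_{j,n-1} v_{j,n-1}ᵀ) F(x_{n-1}) for 1 ≤ n ≤ N_T, one has ‖x_n‖ ≤ C for all 0 ≤ n ≤ N_T. -/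
open scoped InnerProductSpace

set_option maxHeartbeats 800000

/-- Uniform boundedness of the numerical position of the explicit Euler scheme
for index-k saddle dynamics (the bound \hat J_T of Section 4.1 of the paper). -/
theorem boundedness_euler_kSD (N k : ℕ) (hN : 1 ≤ N) (hk : 1 ≤ k)
    (T β L : ℝ) (hT : 0 < T) (hβ : 0 < β) (hL : 0 < L)
    (F : EuclideanSpace ℝ (Fin N) → EuclideanSpace ℝ (Fin N))
    (hF : ∀ y, ‖F y‖ ≤ L * (1 + ‖y‖))
    (x₀ : EuclideanSpace ℝ (Fin N)) :
    ∃ C : ℝ, 0 < C ∧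
      ∀ (NT : ℕ), 0 < NT →
        ∀ (x : ℕ → EuclideanSpace ℝ (Fin N))
          (v : Fin k → ℕ → EuclideanSpace ℝ (Fin N)),
          x 0 = x₀ →
          (∀ j : Fin k, ∀ n ≤ NT, ‖v j n‖ = 1) →
          (∀ n, 1 ≤ n → n ≤ NT →
            x n = x (n - 1) + ((T / NT) * β) •
              (F (x (n - 1)) -
                (2:ℝ) • ∑ j, ⟪v j (n - 1), F (x (n - 1))⟫_ℝ • v j (n - 1))) →
          ∀ n ≤ NT, ‖x n‖ ≤ C := by
  refine ⟨(1 + ‖x₀‖) * Real.exp (T * β * (1 + 2 * k) * L), by positivity, ?_⟩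
  intro NT hNT x v hx0 hv hrec n hn
  have hNT' : (0:ℝ) < (NT:ℝ) := by exact_mod_cast hNT
  set τ : ℝ := T / NT with hτ
  have hτpos : 0 < τ := div_pos hT hNT'
  set a : ℝ := τ * β * (1 + 2 * k) * L with ha
  have hapos : 0 < a := by positivity
  have key : ∀ m ≤ NT, 1 + ‖x m‖ ≤ (1 + a) ^ m * (1 + ‖x₀‖) := by
    intro m hm
    induction m with
    | zero => simp [hx0]
    | succ p ih =>
      have hp : p ≤ NT := Nat.le_of_succ_le hm
      have ih' := ih hp
      have hrec' := hrec (p + 1) (Nat.succ_le_succ (Nat.zero_le p)) hm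
      simp only [Nat.add_sub_cancel] at hrec'
      have hsum : ‖F (x p) - (2:ℝ) • ∑ j, ⟪v j p, F (x p)⟫_ℝ • v j p‖
          ≤ (1 + 2 * k) * ‖F (x p)‖ := by
        have hS : ‖∑ j, ⟪v j p, F (x p)⟫_ℝ • v j p‖ ≤ (k : ℝ) * ‖F (x p)‖ := by
          calc ‖∑ j, ⟪v j p, F (x p)⟫_ℝ • v j p‖
              ≤ ∑ j : Fin k, ‖⟪v j p, F (x p)⟫_ℝ • v j p‖ := norm_sum_le _ _
            _ ≤ ∑ _j : Fin k, ‖F (x p)‖ := by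
                apply Finset.sum_le_sum
                intro j _
                rw [norm_smul, hv j p hp, mul_one]
                calc |⟪v j p, F (x p)⟫_ℝ| ≤ ‖v j p‖ * ‖F (x p)‖ :=
                      abs_real_inner_le_norm _ _
                  _ = ‖F (x p)‖ := by rw [hv j p hp, one_mul]
            _ = (k : ℝ) * ‖F (x p)‖ := by simp [Finset.sum_const, mul_comm]
        calc ‖F (x p) - (2:ℝ) • ∑ j, ⟪v j p, F (x p)⟫_ℝ • v j p‖
            ≤ ‖F (x p)‖ + ‖(2:ℝ) • ∑ j, ⟪v j p, F (x p)⟫_ℝ • v j p‖ :=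
              norm_sub_le _ _
          _ ≤ ‖F (x p)‖ + 2 * ((k : ℝ) * ‖F (x p)‖) := by
              rw [norm_smul]
              simp only [Real.norm_ofNat]
              nlinarith [hS]
          _ = (1 + 2 * k) * ‖F (x p)‖ := by ring
      have hstep : ‖x (p + 1)‖ ≤ ‖x p‖ + a * (1 + ‖x p‖) := by
        rw [hrec']
        calc ‖x p + (τ * β) • (F (x p) - (2:ℝ) • ∑ j, ⟪v j p, F (x p)⟫_ℝ • v j p)‖
            ≤ ‖x p‖ + ‖(τ * β) • (F (x p) - (2:ℝ) • ∑ j, ⟪v j p, F (x p)⟫_ℝ • v j p)‖ :=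
              norm_add_le _ _
          _ ≤ ‖x p‖ + (τ * β) * ((1 + 2 * k) * ‖F (x p)‖) := by
              have he : ‖((τ * β) • (F (x p) - (2:ℝ) • ∑ j, ⟪v j p, F (x p)⟫_ℝ • v j p))‖
                  = (τ * β) * ‖F (x p) - (2:ℝ) • ∑ j, ⟪v j p, F (x p)⟫_ℝ • v j p‖ := by
                rw [norm_smul, Real.norm_eq_abs, abs_of_pos (by positivity)]
              rw [he]
              have htb : (0:ℝ) ≤ τ * β := by positivity
              nlinarith [hsum]
          _ ≤ ‖x p‖ + (τ * β) * ((1 + 2 * k) * (L * (1 + ‖x p‖))) := by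
              have := hF (x p)
              have htb : (0:ℝ) < τ * β := by positivity
              have hkk : (0:ℝ) < 1 + 2 * (k:ℝ) := by positivity
              nlinarith
          _ = ‖x p‖ + a * (1 + ‖x p‖) := by rw [ha]; ring
      calc 1 + ‖x (p + 1)‖ ≤ 1 + (‖x p‖ + a * (1 + ‖x p‖)) := by linarith
        _ = (1 + a) * (1 + ‖x p‖) := by ring
        _ ≤ (1 + a) * ((1 + a) ^ p * (1 + ‖x₀‖)) := by
            have : (0:ℝ) ≤ 1 + a := by positivity
            nlinarith [ih']
        _ = (1 + a) ^ (p + 1) * (1 + ‖x₀‖) := by ring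
  have hkey := key n hn
  have hexp : (1 + a) ^ n ≤ Real.exp (T * β * (1 + 2 * k) * L) := by
    have h1 : (1 + a) ^ n ≤ Real.exp a ^ n := by
      apply pow_le_pow_left₀ (by positivity)
      linarith [Real.add_one_le_exp a]
    have h4 : a * NT = T * β * (1 + 2 * k) * L := by
      rw [ha, hτ]; field_simp
    have h2 : Real.exp a ^ n ≤ Real.exp (T * β * (1 + 2 * k) * L) := by
      rw [← Real.exp_nat_mul]
      apply Real.exp_le_exp.mpr
      have h3 : (n:ℝ) ≤ (NT:ℝ) := by exact_mod_cast hn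
      nlinarith [hapos.le]
    linarith
  have h5 : (1 + a) ^ n * (1 + ‖x₀‖) ≤ Real.exp (T * β * (1 + 2 * k) * L) * (1 + ‖x₀‖) := by
    gcongr
  nlinarith [norm_nonneg (x n), norm_nonneg x₀]
end

section
/- Let N ≥ 1 and k ≥ 1, let v_1, …, v_k ∈ ℝ^N be orthonormal, let J̃ be an arbitrary (not necessarily self-adjoint) linear map from ℝ^N to ℝ^N with operator norm ‖J̃‖ ≤ Ĵ, let τ ≥ 0, and for 1 ≤ i ≤ k set ṽ_i = v_i + τ (I - v_i v_iᵀ) J̃ v_i - τ ∑_{j=1}^{i-1} v_j v_jᵀ (J̃ + J̃ᵀ) v_i, where J̃ᵀ denotes the adjoint of J̃. Then for all 1 ≤ m < i ≤ k, |⟪ṽ_m, ṽ_i⟫| ≤ 4 k² Ĵ² τ²; that is, the first-order (O(τ)) term in ⟪ṽ_m, ṽ_i⟫ vanishes. -/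
open scoped InnerProductSpace

/-- The key estimate of Section 6 of the paper for the generalized high-index saddle
dynamics (GHiSD) of non-gradient systems: thanks to the symmetrization J̃ + J̃ᵀ, the
O(τ) term in ⟪ṽ_m, ṽ_i⟫ vanishes, so |⟪ṽ_m, ṽ_i⟫| = O(τ²). -/
theorem cross_inner_bound_euler_GHiSD (N k : ℕ) (hN : 1 ≤ N) (hk : 1 ≤ k)
    (v : Fin k → EuclideanSpace ℝ (Fin N)) (hON : Orthonormal ℝ v)
    (Jt : EuclideanSpace ℝ (Fin N) →L[ℝ] EuclideanSpace ℝ (Fin N))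
    (Jhat : ℝ) (hJ : ‖Jt‖ ≤ Jhat) (τ : ℝ) (hτ : 0 ≤ τ)
    (vt : Fin k → EuclideanSpace ℝ (Fin N))
    (hvt : ∀ i, vt i = v i + τ • (Jt (v i) - ⟪v i, Jt (v i)⟫_ℝ • v i) -
      τ • ∑ j ∈ Finset.Iio i,
        ⟪v j, (Jt + ContinuousLinearMap.adjoint Jt) (v i)⟫_ℝ • v j) :
    ∀ m i : Fin k, m < i →
      |⟪vt m, vt i⟫_ℝ| ≤ 4 * (k:ℝ) ^ 2 * Jhat ^ 2 * τ ^ 2 := by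
  have hJ0 : 0 ≤ Jhat := le_trans (norm_nonneg _) hJ
  set A : Fin k → EuclideanSpace ℝ (Fin N) := fun i =>
    (Jt (v i) - ⟪v i, Jt (v i)⟫_ℝ • v i) -
      ∑ j ∈ Finset.Iio i, ⟪v j, (Jt + ContinuousLinearMap.adjoint Jt) (v i)⟫_ℝ • v j
    with hA
  have hvt' : ∀ i, vt i = v i + τ • A i := by
    intro i; rw [hvt i, hA]; simp [smul_sub, add_sub_assoc]
  have hnv : ∀ i, ‖v i‖ = 1 := hON.1
  have hiv : ∀ i j : Fin k, ⟪v i, v j⟫_ℝ = if i = j then 1 else 0 := by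
    intro i j
    exact orthonormal_iff_ite.mp hON i j
  -- norm bound on A i
  have hAnorm : ∀ i, ‖A i‖ ≤ 2 * k * Jhat := by
    intro i
    have h1 : ‖Jt (v i)‖ ≤ Jhat := by
      calc ‖Jt (v i)‖ ≤ ‖Jt‖ * ‖v i‖ := Jt.le_opNorm _
        _ ≤ Jhat := by rw [hnv, mul_one]; exact hJ
    have h2 : |⟪v i, Jt (v i)⟫_ℝ| ≤ Jhat := by
      calc |⟪v i, Jt (v i)⟫_ℝ| ≤ ‖v i‖ * ‖Jt (v i)‖ := abs_real_inner_le_norm _ _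
        _ ≤ Jhat := by rw [hnv, one_mul]; exact h1
    have h3 : ∀ j : Fin k, |⟪v j, (Jt + ContinuousLinearMap.adjoint Jt) (v i)⟫_ℝ| ≤ 2 * Jhat := by
      intro j
      calc |⟪v j, (Jt + ContinuousLinearMap.adjoint Jt) (v i)⟫_ℝ|
          ≤ ‖v j‖ * ‖(Jt + ContinuousLinearMap.adjoint Jt) (v i)‖ := abs_real_inner_le_norm _ _
        _ ≤ ‖Jt + ContinuousLinearMap.adjoint Jt‖ * ‖v i‖ := by
            rw [hnv, one_mul]; exact (Jt + ContinuousLinearMap.adjoint Jt).le_opNorm _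
        _ ≤ 2 * Jhat := by
            rw [hnv, mul_one]
            calc ‖Jt + ContinuousLinearMap.adjoint Jt‖
                ≤ ‖Jt‖ + ‖ContinuousLinearMap.adjoint Jt‖ := norm_add_le _ _
              _ = ‖Jt‖ + ‖Jt‖ := by rw [ContinuousLinearMap.adjoint.norm_map Jt]
              _ ≤ 2 * Jhat := by linarith
    have hsum : ‖∑ j ∈ Finset.Iio i, ⟪v j, (Jt + ContinuousLinearMap.adjoint Jt) (v i)⟫_ℝ • v j‖
        ≤ (i : ℕ) * (2 * Jhat) := by
      calc ‖∑ j ∈ Finset.Iio i, ⟪v j, (Jt + ContinuousLinearMap.adjoint Jt) (v i)⟫_ℝ • v j‖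
          ≤ ∑ j ∈ Finset.Iio i, ‖⟪v j, (Jt + ContinuousLinearMap.adjoint Jt) (v i)⟫_ℝ • v j‖ :=
            norm_sum_le _ _
        _ ≤ ∑ j ∈ Finset.Iio i, 2 * Jhat := by
            refine Finset.sum_le_sum fun j _ => ?_
            rw [norm_smul, hnv, mul_one]
            exact h3 j
        _ = (i : ℕ) * (2 * Jhat) := by
            rw [Finset.sum_const, nsmul_eq_mul, Fin.card_Iio]
    have hik : (i : ℕ) + 1 ≤ k := i.isLt
    calc ‖A i‖ ≤ ‖Jt (v i) - ⟪v i, Jt (v i)⟫_ℝ • v i‖ +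
          ‖∑ j ∈ Finset.Iio i, ⟪v j, (Jt + ContinuousLinearMap.adjoint Jt) (v i)⟫_ℝ • v j‖ :=
          norm_sub_le _ _
      _ ≤ (‖Jt (v i)‖ + ‖⟪v i, Jt (v i)⟫_ℝ • v i‖) + (i : ℕ) * (2 * Jhat) :=
          add_le_add (norm_sub_le _ _) hsum
      _ ≤ (Jhat + Jhat) + (i : ℕ) * (2 * Jhat) := by
          refine add_le_add (add_le_add h1 ?_) le_rfl
          rw [norm_smul, hnv, mul_one]; exact h2
      _ ≤ 2 * k * Jhat := by
          have : ((i : ℕ) : ℝ) + 1 ≤ (k : ℝ) := by exact_mod_cast hik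
          nlinarith
  intro m i hmi
  -- first-order term vanishes
  have hvmAi : ⟪v m, A i⟫_ℝ = ⟪v m, Jt (v i)⟫_ℝ -
      ⟪v m, (Jt + ContinuousLinearMap.adjoint Jt) (v i)⟫_ℝ := by
    rw [hA]
    simp only [inner_sub_right, inner_smul_right, inner_sum]
    rw [Finset.sum_eq_single_of_mem m (by simpa [Finset.mem_Iio] using hmi)]
    · rw [hiv m m, hiv m i]
      simp [hmi.ne]
    · intro j _ hj
      rw [hiv m j]
      simp [Ne.symm hj]
  have hAmvi : ⟪A m, v i⟫_ℝ = ⟪Jt (v m), v i⟫_ℝ := by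
    rw [hA]
    simp only [inner_sub_left, inner_smul_left, sum_inner]
    rw [hiv m i, if_neg hmi.ne, Finset.sum_eq_zero]
    · ring
    · intro j hj
      have hji : j ≠ i := by
        rw [Finset.mem_Iio] at hj
        exact (hj.trans hmi).ne
      rw [hiv j i, if_neg hji, mul_zero]
  have hcancel : ⟪v m, A i⟫_ℝ + ⟪A m, v i⟫_ℝ = 0 := by
    rw [hvmAi, hAmvi]
    have : ⟪v m, ContinuousLinearMap.adjoint Jt (v i)⟫_ℝ = ⟪Jt (v m), v i⟫_ℝ :=
      ContinuousLinearMap.adjoint_inner_right _ _ _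
    simp only [ContinuousLinearMap.add_apply, inner_add_right]
    rw [this]; ring
  have hexp : ⟪vt m, vt i⟫_ℝ = τ ^ 2 * ⟪A m, A i⟫_ℝ := by
    rw [hvt' m, hvt' i]
    rw [inner_add_left, inner_add_right, inner_add_right, real_inner_smul_left,
      real_inner_smul_left, real_inner_smul_right, real_inner_smul_right,
      hiv m i, if_neg hmi.ne]
    linear_combination τ * hcancel
  rw [hexp, abs_mul]
  have h1 : |⟪A m, A i⟫_ℝ| ≤ (2 * k * Jhat) * (2 * k * Jhat) := by
    calc |⟪A m, A i⟫_ℝ| ≤ ‖A m‖ * ‖A i‖ := abs_real_inner_le_norm _ _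
      _ ≤ (2 * k * Jhat) * (2 * k * Jhat) :=
        mul_le_mul (hAnorm m) (hAnorm i) (norm_nonneg _) (by positivity)
  calc |τ ^ 2| * |⟪A m, A i⟫_ℝ| = τ ^ 2 * |⟪A m, A i⟫_ℝ| := by rw [abs_of_nonneg (by positivity)]
    _ ≤ τ ^ 2 * ((2 * k * Jhat) * (2 * k * Jhat)) := by
        exact mul_le_mul_of_nonneg_left h1 (by positivity)
    _ = 4 * (k:ℝ) ^ 2 * Jhat ^ 2 * τ ^ 2 := by ring
end
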